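/- arXiv:2409.09017 — 12 statements merged into one kernel-verified Lean document; each statement's English description precedes it below -/
import Mathlib

section
/- Let (h, [·,·]_h) be a Lie algebra over a field F, let a and i be vector spaces, let ρ : h → gl(i) be a representation, and let φ : h → Hom(a, i) be a linear map satisfying the 1-cocycle condition φ([x,y]_h) = ρ(x)∘φ(y) − ρ(y)∘φ(x) for all x, y in h. Let λ : h × h → a and μ : h × h → i be skew-symmetric bilinear maps. Define a skew-symmetric bilinear map [·,·] on h ⊕ a ⊕ i by [x,y] = [x,y]_h + λ(x,y) + μ(x,y) and [x, u + α] = φ(x)(u) + ρ(x)(α) for x, y in h, u in a, α in i, with all brackets among elements of a ⊕ i equal to zero. Then [·,·] is a Lie bracket on h ⊕ a ⊕ i if and only if the following two identities hold for all x, y, z in h: (1) λ([x,y]_h, z) + λ([y,z]_h, x) + λ([z,x]_h, y) = 0; and (2) φ(x)(λ(y,z)) − φ(y)(λ(x,z)) + φ(z)(λ(x,y)) + ρ(x)(μ(y,z)) − ρ(y)(μ(x,z)) + ρ(z)(μ(x,y)) − μ([x,y]_h, z) + μ([x,z]_h, y) − μ([y,z]_h, x) = 0. -/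
/-- the bracket on `h ⊕ a ⊕ i` built from a Lie algebra `h`, a trivial
module `a`, a representation `ρ` on `i`, a 1-cocycle `φ` and skew bilinear maps
`λ, μ` is a Lie bracket if and only if `d_a(λ) = 0` and `e_φ(λ) + d_ρ(μ) = 0`. -/
theorem stmt2 (F : Type*) [Field F] [CharZero F]
    (h : Type*) [LieRing h] [LieAlgebra F h] [FiniteDimensional F h]
    (a : Type*) [AddCommGroup a] [Module F a] [FiniteDimensional F a]
    (i : Type*) [AddCommGroup i] [Module F i] [FiniteDimensional F i]
    (ρ : h →ₗ[F] i →ₗ[F] i)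
    (hρ : ∀ x y : h, ρ ⁅x, y⁆ = ρ x ∘ₗ ρ y - ρ y ∘ₗ ρ x)
    (φ : h →ₗ[F] a →ₗ[F] i)
    (hφ : ∀ x y : h, φ ⁅x, y⁆ = ρ x ∘ₗ φ y - ρ y ∘ₗ φ x)
    (la : h →ₗ[F] h →ₗ[F] a) (hla : ∀ x y : h, la x y = - la y x)
    (mu : h →ₗ[F] h →ₗ[F] i) (hmu : ∀ x y : h, mu x y = - mu y x) :
    -- the bracket `[x+u+α, y+v+β] = [x,y]_h + λ(x,y) + μ(x,y) + φ(x)(v) − φ(y)(u)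
    --                                + ρ(x)(β) − ρ(y)(α)` on `h ⊕ a ⊕ i`
    let br : h × a × i → h × a × i → h × a × i :=
      fun p q => (⁅p.1, q.1⁆, la p.1 q.1,
        mu p.1 q.1 + φ p.1 q.2.1 - φ q.1 p.2.1 + ρ p.1 q.2.2 - ρ q.1 p.2.2)
    -- Jacobi identity (i.e. being a Lie bracket) is equivalent to the two conditions
    ((∀ p q r : h × a × i, br p (br q r) + br q (br r p) + br r (br p q) = 0) ↔
      ((∀ x y z : h, la ⁅x, y⁆ z + la ⁅y, z⁆ x + la ⁅z, x⁆ y = 0) ∧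
       (∀ x y z : h,
          φ x (la y z) - φ y (la x z) + φ z (la x y)
            + ρ x (mu y z) - ρ y (mu x z) + ρ z (mu x y)
            - mu ⁅x, y⁆ z + mu ⁅x, z⁆ y - mu ⁅y, z⁆ x = 0))) := by

  intro br
  constructor
  · intro H
    constructor
    · intro x y z
      have h2 := congrArg (fun t : h × a × i => t.2.1) (H (x,0,0) (y,0,0) (z,0,0))
      simp only [br, Prod.fst_add, Prod.snd_add, Prod.snd_zero, Prod.fst_zero] at h2
      linear_combination (norm := module) hla ⁅x,y⁆ z + hla ⁅y,z⁆ x + hla ⁅z,x⁆ y - h2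
    · intro x y z
      have h3 := congrArg (fun t : h × a × i => t.2.2) (H (x,0,0) (y,0,0) (z,0,0))
      simp only [br, Prod.fst_add, Prod.snd_add, Prod.snd_zero, Prod.fst_zero, map_zero,
        LinearMap.zero_apply] at h3
      rw [hmu x ⁅y,z⁆, hmu y ⁅z,x⁆, hmu z ⁅x,y⁆, hla z x, hmu z x, ← lie_skew z x] at h3
      simp only [add_zero, sub_zero, map_neg, LinearMap.neg_apply, neg_neg] at h3
      linear_combination (norm := module) h3
  · rintro ⟨h1, h2⟩ p q r
    have j : ⁅p.1, ⁅q.1, r.1⁆⁆ + ⁅q.1, ⁅r.1, p.1⁆⁆ + ⁅r.1, ⁅p.1, q.1⁆⁆ = 0 :=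
      lie_jacobi p.1 q.1 r.1
    have l2 : la p.1 ⁅q.1, r.1⁆ + la q.1 ⁅r.1, p.1⁆ + la r.1 ⁅p.1, q.1⁆ = 0 := by
      linear_combination (norm := module)
        hla p.1 ⁅q.1,r.1⁆ + hla q.1 ⁅r.1,p.1⁆ + hla r.1 ⁅p.1,q.1⁆ - h1 q.1 r.1 p.1
    have hφ1 := LinearMap.congr_fun (hφ q.1 r.1) p.2.1
    have hφ2 := LinearMap.congr_fun (hφ p.1 r.1) q.2.1
    have hφ3 := LinearMap.congr_fun (hφ p.1 q.1) r.2.1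
    have hρ1 := LinearMap.congr_fun (hρ q.1 r.1) p.2.2
    have hρ2 := LinearMap.congr_fun (hρ p.1 r.1) q.2.2
    have hρ3 := LinearMap.congr_fun (hρ p.1 q.1) r.2.2
    simp only [LinearMap.sub_apply, LinearMap.comp_apply] at hφ1 hφ2 hφ3 hρ1 hρ2 hρ3
    have c2 := h2 p.1 q.1 r.1
    refine Prod.ext ?_ (Prod.ext ?_ ?_)
    · simpa [br] using j
    · simpa [br] using l2
    · show (mu p.1 ⁅q.1,r.1⁆ + φ p.1 (la q.1 r.1) - φ ⁅q.1,r.1⁆ p.2.1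
          + ρ p.1 (mu q.1 r.1 + φ q.1 r.2.1 - φ r.1 q.2.1 + ρ q.1 r.2.2 - ρ r.1 q.2.2)
          - ρ ⁅q.1,r.1⁆ p.2.2)
        + (mu q.1 ⁅r.1,p.1⁆ + φ q.1 (la r.1 p.1) - φ ⁅r.1,p.1⁆ q.2.1
          + ρ q.1 (mu r.1 p.1 + φ r.1 p.2.1 - φ p.1 r.2.1 + ρ r.1 p.2.2 - ρ p.1 r.2.2)
          - ρ ⁅r.1,p.1⁆ q.2.2)
        + (mu r.1 ⁅p.1,q.1⁆ + φ r.1 (la p.1 q.1) - φ ⁅p.1,q.1⁆ r.2.1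
          + ρ r.1 (mu p.1 q.1 + φ p.1 q.2.1 - φ q.1 p.2.1 + ρ p.1 q.2.2 - ρ q.1 p.2.2)
          - ρ ⁅p.1,q.1⁆ r.2.2) = 0
      rw [hmu p.1 ⁅q.1,r.1⁆, hmu q.1 ⁅r.1,p.1⁆, hmu r.1 ⁅p.1,q.1⁆, hla r.1 p.1, hmu r.1 p.1]
      rw [← lie_skew r.1 p.1]
      simp only [map_neg, LinearMap.neg_apply, map_add, map_sub]
      linear_combination (norm := module) c2 - hφ1 + hφ2 - hφ3 - hρ1 + hρ2 - hρ3
end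

section
/- Let h(λ, μ, φ, ρ) and h(λ′, μ′, φ, ρ) be two Lie algebras on h ⊕ a ⊕ i constructed from the same Lie algebra (h, [·,·]_h), representation ρ : h → gl(i), and 1-cocycle φ : h → Hom(a, i), with 2-cocycles (λ, μ) and (λ′, μ′) respectively. Suppose there exist linear maps L : h → a and M : h → i such that λ′(x,y) = λ(x,y) − L([x,y]_h) and μ′(x,y) = μ(x,y) + φ(x)(L(y)) − φ(y)(L(x)) + ρ(x)(M(y)) − ρ(y)(M(x)) − M([x,y]_h) for all x, y in h (i.e. (λ′,μ′) = (λ,μ) + d_R(L,M), so they lie in the same cohomology class). Then the linear map Ψ defined by Ψ(x) = x − L(x) − M(x) for x in h and Ψ(u + α) = u + α for u in a, α in i, is an isomorphism of Lie algebras from h(λ, μ, φ, ρ) to h(λ′, μ′, φ, ρ) which restricts to the identity on a and on i. -/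
/-- if two 2-cocycles `(λ, μ)` and `(λ′, μ′)` differ by the coboundary
`d_R(L, M)`, then `Ψ(x + u + α) = x + (u − L(x)) + (α − M(x))` is an isomorphism of
Lie algebras `h(λ, μ, φ, ρ) → h(λ′, μ′, φ, ρ)` restricting to the identity on `a`
and on `i`. -/
theorem stmt3 (F : Type*) [Field F] [CharZero F]
    (h : Type*) [LieRing h] [LieAlgebra F h] [FiniteDimensional F h]
    (a : Type*) [AddCommGroup a] [Module F a] [FiniteDimensional F a]
    (i : Type*) [AddCommGroup i] [Module F i] [FiniteDimensional F i]
    (ρ : h →ₗ[F] i →ₗ[F] i)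
    (hρ : ∀ x y : h, ρ ⁅x, y⁆ = ρ x ∘ₗ ρ y - ρ y ∘ₗ ρ x)
    (φ : h →ₗ[F] a →ₗ[F] i)
    (hφ : ∀ x y : h, φ ⁅x, y⁆ = ρ x ∘ₗ φ y - ρ y ∘ₗ φ x)
    (la la' : h →ₗ[F] h →ₗ[F] a) (hla : ∀ x y : h, la x y = - la y x)
    (mu mu' : h →ₗ[F] h →ₗ[F] i) (hmu : ∀ x y : h, mu x y = - mu y x)
    -- `(λ, μ)` is a 2-cocycle
    (hcoc1 : ∀ x y z : h, la ⁅x, y⁆ z + la ⁅y, z⁆ x + la ⁅z, x⁆ y = 0)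
    (hcoc2 : ∀ x y z : h,
      φ x (la y z) - φ y (la x z) + φ z (la x y)
        + ρ x (mu y z) - ρ y (mu x z) + ρ z (mu x y)
        - mu ⁅x, y⁆ z + mu ⁅x, z⁆ y - mu ⁅y, z⁆ x = 0)
    -- `(λ′, μ′) = (λ, μ) + d_R(L, M)` for linear maps `L : h → a`, `M : h → i`
    (L : h →ₗ[F] a) (M : h →ₗ[F] i)
    (hla' : ∀ x y : h, la' x y = la x y - L ⁅x, y⁆)
    (hmu' : ∀ x y : h, mu' x y =
      mu x y + φ x (L y) - φ y (L x) + ρ x (M y) - ρ y (M x) - M ⁅x, y⁆) :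
    -- brackets of `h(λ, μ, φ, ρ)` and `h(λ′, μ′, φ, ρ)` on `h ⊕ a ⊕ i`
    let br : h × a × i → h × a × i → h × a × i :=
      fun p q => (⁅p.1, q.1⁆, la p.1 q.1,
        mu p.1 q.1 + φ p.1 q.2.1 - φ q.1 p.2.1 + ρ p.1 q.2.2 - ρ q.1 p.2.2)
    let br' : h × a × i → h × a × i → h × a × i :=
      fun p q => (⁅p.1, q.1⁆, la' p.1 q.1,
        mu' p.1 q.1 + φ p.1 q.2.1 - φ q.1 p.2.1 + ρ p.1 q.2.2 - ρ q.1 p.2.2)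
    let Ψ : h × a × i → h × a × i :=
      fun p => (p.1, p.2.1 - L p.1, p.2.2 - M p.1)
    -- `Ψ` is linear, bijective, bracket-preserving, and the identity on `a` and `i`
    (∀ p q : h × a × i, Ψ (p + q) = Ψ p + Ψ q) ∧
    (∀ (c : F) (p : h × a × i), Ψ (c • p) = c • Ψ p) ∧
    Function.Bijective Ψ ∧
    (∀ p q : h × a × i, Ψ (br p q) = br' (Ψ p) (Ψ q)) ∧
    (∀ (u : a) (α : i), Ψ (0, u, α) = (0, u, α)) := by
  intro br br' Ψ
  refine ⟨?_, ?_, ?_, ?_, ?_⟩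
  · intro p q
    simp only [Ψ, Prod.ext_iff, Prod.fst_add, Prod.snd_add, map_add]
    refine ⟨trivial, ?_, ?_⟩ <;> abel
  · intro c p
    simp only [Ψ, Prod.ext_iff, Prod.smul_fst, Prod.smul_snd, map_smul, smul_sub]
    exact ⟨by trivial, by trivial, by trivial⟩
  · refine ⟨fun p q hpq => ?_, fun p => ⟨(p.1, p.2.1 + L p.1, p.2.2 + M p.1), ?_⟩⟩
    · simp only [Ψ, Prod.ext_iff] at hpq ⊢
      obtain ⟨h1, h2, h3⟩ := hpq
      rw [h1] at h2 h3
      exact ⟨h1, by linear_combination (norm := abel) h2, by linear_combination (norm := abel) h3⟩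
    · simp only [Ψ, Prod.ext_iff]
      exact ⟨trivial, by abel, by abel⟩
  · intro p q
    simp only [Ψ, br, br', Prod.ext_iff, hla', hmu', map_sub]
    refine ⟨trivial, trivial, by abel⟩
  · intro u α
    simp [Ψ]
end

section
/- Let g be a finite-dimensional nilpotent Lie algebra over a field F, with J(g) = ∩_{k≥1} (Z_k(g) + g^k) where Z_k(g) is the upper central series and g^k the lower central series. Then there exists an integer m ≥ 1 such that J(g) = Z(g) + Σ_{k=1}^{m−1} (Z_{k+1}(g) ∩ g^k), where Z(g) denotes the center of g. -/
private lemma ucs_bot_monotone {F : Type*} [Field F] {g : Type*} [LieRing g] [LieAlgebra F g] :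
    Monotone (fun k => (⊥ : LieIdeal F g).ucs k) := by
  apply monotone_nat_of_le_succ
  intro k
  rw [LieSubmodule.ucs_succ]
  exact LieSubmodule.le_normalizer _

/-- for a finite-dimensional nilpotent Lie algebra `g` there is `m ≥ 1`
with `J(g) = Z(g) + Σ_{k=1}^{m−1} (Z_{k+1}(g) ⊓ g^k)`. -/
theorem stmt5 (F : Type*) [Field F] [CharZero F]
    (g : Type*) [LieRing g] [LieAlgebra F g] [FiniteDimensional F g]
    [LieRing.IsNilpotent g] :
    ∃ m : ℕ, 1 ≤ m ∧
      (⨅ k : ℕ, ((⊥ : LieIdeal F g).ucs (k + 1) ⊔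
          LieModule.lowerCentralSeries F g g (k + 1))) =
        (⊥ : LieIdeal F g).ucs 1 ⊔
          ⨆ k ∈ Finset.Icc 1 (m - 1),
            ((⊥ : LieIdeal F g).ucs (k + 1) ⊓ LieModule.lowerCentralSeries F g g k) := by
  obtain ⟨n, hn⟩ := (LieModule.isNilpotent_iff F g g).mp inferInstance
  set Z : ℕ → LieIdeal F g := fun k => (⊥ : LieIdeal F g).ucs k with hZ
  set G : ℕ → LieIdeal F g := fun k => LieModule.lowerCentralSeries F g g k with hG
  have hGm : ∀ {a b : ℕ}, a ≤ b → G b ≤ G a := fun h =>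
    LieModule.antitone_lowerCentralSeries F g g h
  have hZm : ∀ {a b : ℕ}, a ≤ b → Z a ≤ Z b := fun h => ucs_bot_monotone h
  refine ⟨n + 1, le_add_self, ?_⟩
  have hGbot : G (n + 1) = ⊥ := le_bot_iff.mp (hn ▸ hGm (Nat.le_succ n))
  -- the partial sums
  set S : ℕ → LieIdeal F g := fun j => Z 1 ⊔ ⨆ k ∈ Finset.Icc 1 j, (Z (k + 1) ⊓ G k) with hS
  have hSle : ∀ j, S j ≤ Z (j + 1) := by
    intro j
    refine sup_le (hZm (Nat.le_add_left 1 j)) ?_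
    refine iSup₂_le fun k hk => ?_
    have hk' := (Finset.mem_Icc.mp hk).2
    exact le_trans inf_le_left (hZm (by omega))
  apply le_antisymm
  · -- hard direction, via induction
    have key : ∀ j : ℕ,
        (⨅ k : ℕ, (Z (k + 1) ⊔ G (k + 1))) ≤ S j ⊔ G (j + 1) := by
      intro j
      induction j with
      | zero =>
        refine le_trans (iInf_le _ 0) ?_
        exact sup_le (le_sup_of_le_left le_sup_left) le_sup_right
      | succ j ih =>
        have h1 : (⨅ k : ℕ, (Z (k + 1) ⊔ G (k + 1))) ≤
            (S j ⊔ G (j + 1)) ⊓ (Z (j + 2) ⊔ G (j + 2)) :=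
          le_inf ih (iInf_le _ (j + 1))
        refine le_trans h1 ?_
        have hmod1 : (S j ⊔ G (j + 1)) ⊓ (Z (j + 2) ⊔ G (j + 2)) =
            S j ⊔ (G (j + 1) ⊓ (Z (j + 2) ⊔ G (j + 2))) :=
          sup_inf_assoc_of_le _ (le_trans (le_trans (hSle j) (hZm (by omega))) le_sup_left)
        have hmod2 : (G (j + 2) ⊔ Z (j + 2)) ⊓ G (j + 1) =
            G (j + 2) ⊔ (Z (j + 2) ⊓ G (j + 1)) :=
          sup_inf_assoc_of_le _ (hGm (by omega))
        rw [hmod1, inf_comm, sup_comm (Z (j+2)), hmod2]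
        refine sup_le ?_ (sup_le ?_ ?_)
        · -- S j ≤ S (j+1) ⊔ _
          refine le_sup_of_le_left (sup_le le_sup_left ?_)
          refine iSup₂_le fun k hk => ?_
          have hk' := Finset.mem_Icc.mp hk
          refine le_sup_of_le_right (le_iSup₂_of_le k ?_ le_rfl)
          exact Finset.mem_Icc.mpr ⟨hk'.1, by omega⟩
        · exact le_sup_right
        · refine le_sup_of_le_left (le_sup_of_le_right ?_)
          exact le_iSup₂_of_le (j + 1) (Finset.mem_Icc.mpr ⟨by omega, le_rfl⟩) le_rfl
    have h := key n
    rw [hGbot, sup_bot_eq] at h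
    rw [show n + 1 - 1 = n from Nat.add_sub_cancel n 1]
    exact h
  · -- easy direction
    refine le_iInf fun j => sup_le (le_sup_of_le_left (hZm (by omega))) ?_
    refine iSup₂_le fun k hk => ?_
    rcases le_or_gt k j with h | h
    · exact le_sup_of_le_left (le_trans inf_le_left (hZm (by omega)))
    · exact le_sup_of_le_right (le_trans inf_le_right (hGm (by omega)))
end

section
/- Let g be a finite-dimensional nilpotent Lie algebra over a field F. Define i(g) = Σ_{k≥1} (Z_k(g) ∩ g^k) and J(g) = ∩_{k≥1} (Z_k(g) + g^k), where Z_k(g) is the upper central series and g^k the lower central series. Then J(g) is an abelian ideal of g, i(g) is an ideal of g, and [g, J(g)] ⊆ i(g). -/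
section Aux

variable {F : Type*} [Field F] {g : Type*} [LieRing g] [LieAlgebra F g]

private lemma zmono (k : ℕ) :
    (⊥ : LieIdeal F g).ucs k ≤ (⊥ : LieIdeal F g).ucs (k + 1) := by
  rw [LieSubmodule.ucs_succ]
  exact LieSubmodule.le_normalizer _

private lemma zmono' {k l : ℕ} (h : k ≤ l) :
    (⊥ : LieIdeal F g).ucs k ≤ (⊥ : LieIdeal F g).ucs l := by
  induction l with
  | zero => simp [Nat.le_zero.mp h]
  | succ l ih =>
    rcases Nat.lt_or_ge k (l + 1) with h' | h'
    · exact (ih (by omega)).trans (zmono l)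
    · have : k = l + 1 := by omega
      simp [this]

private lemma aux1 {m : ℕ} {y : g} (hy : y ∈ (⊥ : LieIdeal F g).ucs (m + 1)) (x : g) :
    ⁅x, y⁆ ∈ (⊥ : LieIdeal F g).ucs m := by
  rw [LieSubmodule.ucs_succ] at hy
  exact (LieSubmodule.mem_normalizer _ _).mp hy x

private lemma aux1' {m : ℕ} {y : g} (hy : y ∈ (⊥ : LieIdeal F g).ucs m) (x : g) :
    ⁅x, y⁆ ∈ (⊥ : LieIdeal F g).ucs (m - 1) := by
  cases m with
  | zero =>
    rw [LieSubmodule.ucs_zero, LieSubmodule.mem_bot] at hy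
    simp [hy, LieSubmodule.mem_bot]
  | succ m => exact aux1 hy x

/-- `[g^n, Z_m] ⊆ Z_{m - n - 1}` (with `g^0 = g` and truncated subtraction). -/
private lemma aux2 (n : ℕ) : ∀ (m : ℕ) (x y : g),
    x ∈ LieModule.lowerCentralSeries F g g n → y ∈ (⊥ : LieIdeal F g).ucs m →
    ⁅x, y⁆ ∈ (⊥ : LieIdeal F g).ucs (m - (n + 1)) := by
  induction n with
  | zero =>
    intro m x y _ hy
    simpa using aux1' hy x
  | succ n ih =>
    intro m x y hx hy
    rw [LieModule.lowerCentralSeries_succ, ← LieSubmodule.mem_toSubmodule,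
      LieSubmodule.lieIdeal_oper_eq_linear_span'] at hx
    induction hx using Submodule.span_induction with
    | mem x hx =>
      obtain ⟨u, -, v, hv, rfl⟩ := hx
      rw [lie_lie]
      have h1 : ⁅u, ⁅v, y⁆⁆ ∈ (⊥ : LieIdeal F g).ucs (m - (n + 1) - 1) :=
        aux1' (ih m v y hv hy) u
      have h2 : ⁅v, ⁅u, y⁆⁆ ∈ (⊥ : LieIdeal F g).ucs (m - 1 - (n + 1)) :=
        ih (m - 1) v _ hv (aux1' hy u)
      rw [show m - (n + 1) - 1 = m - (n + 1 + 1) from by omega] at h1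
      rw [show m - 1 - (n + 1) = m - (n + 1 + 1) from by omega] at h2
      exact sub_mem h1 h2
    | zero => simp
    | add a b _ _ ha hb => rw [add_lie]; exact add_mem ha hb
    | smul t a _ ha => rw [smul_lie]; exact SMulMemClass.smul_mem t ha

private lemma aux3 {n : ℕ} {y : g} (hy : y ∈ LieModule.lowerCentralSeries F g g n) (x : g) :
    ⁅x, y⁆ ∈ LieModule.lowerCentralSeries F g g (n + 1) := by
  rw [LieModule.lowerCentralSeries_succ]
  exact LieSubmodule.lie_mem_lie (LieSubmodule.mem_top x) hy

/-- key decomposition: if `y ∈ J(g)` then for every `x`, `⁅x, y⁆` is a finite sum of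
brackets `⁅x, d k⁆` with `d k ∈ Z_{k+2} ∩ g^{k+1}`. -/
private lemma auxKey [LieRing.IsNilpotent g] (y : g)
    (hy : ∀ k : ℕ, y ∈ (⊥ : LieIdeal F g).ucs (k + 1) ⊔
      LieModule.lowerCentralSeries F g g (k + 1)) :
    ∃ (N : ℕ) (d : ℕ → g),
      (∀ k, d k ∈ (⊥ : LieIdeal F g).ucs (k + 2) ∧
        d k ∈ LieModule.lowerCentralSeries F g g (k + 1)) ∧
      ∀ x : g, ⁅x, y⁆ = ∑ k ∈ Finset.range N, ⁅x, d k⁆ := by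
  choose z hz w hw hzw using fun k => (LieSubmodule.mem_sup _ _ y).mp (hy k)
  obtain ⟨c, hc⟩ := LieModule.IsNilpotent.nilpotent (R := F) (L := g)
    (M := g)
  have hwc : w c = 0 := by
    have : w c ∈ LieModule.lowerCentralSeries F g g c :=
      LieModule.antitone_lowerCentralSeries F g g (Nat.le_succ c) (hw c)
    rw [hc, LieSubmodule.mem_bot] at this
    exact this
  refine ⟨c, fun k => z (k + 1) - z k, fun k => ?_, fun x => ?_⟩
  · refine ⟨sub_mem (hz (k + 1)) (zmono (k + 1) (hz k)), ?_⟩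
    have heq : z (k + 1) - z k = w k - w (k + 1) := by
      have h := (hzw k).trans (hzw (k + 1)).symm
      rw [sub_eq_sub_iff_add_eq_add, ← h]
      abel
    show z (k + 1) - z k ∈ _
    rw [heq]
    exact sub_mem (hw k)
        (LieModule.antitone_lowerCentralSeries F g g (Nat.le_succ (k + 1)) (hw (k + 1)))
  · have hsum : ∑ k ∈ Finset.range c, (z (k + 1) - z k) = z c - z 0 :=
      Finset.sum_range_sub z c
    have hzc : z c = y := by
      have := hzw c
      rw [hwc, add_zero] at this
      exact this
    have hz0 : ⁅x, z 0⁆ = 0 := by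
      have := aux1 (hz 0) x
      rwa [LieSubmodule.ucs_zero, LieSubmodule.mem_bot] at this
    have hls : ⁅x, ∑ k ∈ Finset.range c, (z (k + 1) - z k)⁆ =
        ∑ k ∈ Finset.range c, ⁅x, z (k + 1) - z k⁆ :=
      map_sum (LieModule.toEnd F g g x) _ _
    rw [← hls, hsum, lie_sub, hzc, hz0, sub_zero]

end Aux

/-- for a finite-dimensional nilpotent Lie algebra `g`, the canonical
ideal `J(g)` is abelian, `i(g)` is an ideal, and `[g, J(g)] ⊆ i(g)`. -/
theorem stmt6 (F : Type*) [Field F] [CharZero F]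
    (g : Type*) [LieRing g] [LieAlgebra F g] [FiniteDimensional F g]
    [LieRing.IsNilpotent g] :
    let iI : LieIdeal F g := ⨆ k : ℕ, ((⊥ : LieIdeal F g).ucs (k + 1) ⊓
      LieModule.lowerCentralSeries F g g (k + 1))
    let JI : LieIdeal F g := ⨅ k : ℕ, ((⊥ : LieIdeal F g).ucs (k + 1) ⊔
      LieModule.lowerCentralSeries F g g (k + 1))
    -- `J(g)` is abelian
    (∀ x y : g, x ∈ JI → y ∈ JI → ⁅x, y⁆ = 0) ∧
    -- `i(g)` is an ideal of `g`
    (∀ x y : g, y ∈ iI → ⁅x, y⁆ ∈ iI) ∧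
    -- `[g, J(g)] ⊆ i(g)`
    (∀ x y : g, y ∈ JI → ⁅x, y⁆ ∈ iI) := by
  intro iI JI
  have hJ : ∀ y : g, y ∈ JI → ∀ k : ℕ, y ∈ (⊥ : LieIdeal F g).ucs (k + 1) ⊔
      LieModule.lowerCentralSeries F g g (k + 1) := by
    intro y hy k
    exact (LieSubmodule.mem_iInf _).mp hy k
  refine ⟨?_, ?_, ?_⟩
  · -- J(g) is abelian
    intro x y hx hy
    obtain ⟨N, d, hd, hsum⟩ := auxKey y (hJ y hy)
    rw [hsum x]
    refine Finset.sum_eq_zero fun k _ => ?_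
    obtain ⟨a, ha, b, hb, hab⟩ := (LieSubmodule.mem_sup _ _ x).mp (hJ x hx k)
    have hd1 : d k ∈ (⊥ : LieIdeal F g).ucs (k + 2) := (hd k).1
    have hd2 : d k ∈ LieModule.lowerCentralSeries F g g (k + 1) := (hd k).2
    have h1 : ⁅d k, a⁆ = 0 := by
      have := aux2 (k + 1) (k + 1) (d k) a hd2 ha
      rw [show (k + 1) - ((k + 1) + 1) = 0 from by omega, LieSubmodule.ucs_zero,
        LieSubmodule.mem_bot] at this
      exact this
    have h2 : ⁅b, d k⁆ = 0 := by
      have := aux2 (k + 1) (k + 2) b (d k) hb hd1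
      rw [show (k + 2) - ((k + 1) + 1) = 0 from by omega, LieSubmodule.ucs_zero,
        LieSubmodule.mem_bot] at this
      exact this
    calc ⁅x, d k⁆ = ⁅a + b, d k⁆ := by rw [hab]
    _ = ⁅a, d k⁆ + ⁅b, d k⁆ := add_lie a b (d k)
    _ = 0 := by rw [h2, ← lie_skew, h1, neg_zero, add_zero]
  · -- i(g) is an ideal
    intro x y hy
    exact iI.lie_mem hy
  · -- [g, J(g)] ⊆ i(g)
    intro x y hy
    obtain ⟨N, d, hd, hsum⟩ := auxKey y (hJ y hy)
    rw [hsum x]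
    rw [← LieSubmodule.mem_toSubmodule]
    refine Submodule.sum_mem _ fun k _ => ?_
    rw [LieSubmodule.mem_toSubmodule]
    have hmem : ⁅x, d k⁆ ∈ (⊥ : LieIdeal F g).ucs (k + 1 + 1) ⊓
        LieModule.lowerCentralSeries F g g (k + 1 + 1) := by
      constructor
      · exact zmono (k + 1) (aux1 (hd k).1 x)
      · exact aux3 (hd k).2 x
    exact le_iSup (fun k : ℕ => ((⊥ : LieIdeal F g).ucs (k + 1) ⊓
      LieModule.lowerCentralSeries F g g (k + 1))) (k + 1) hmem
end

section
/- Let g be a finite-dimensional nilpotent Lie algebra over a field F admitting an invariant metric B, i.e. a non-degenerate symmetric bilinear form B : g × g → F with B([x,y],z) = −B(y,[x,z]) for all x, y, z in g. Define i(g) = Σ_{k≥1} (Z_k(g) ∩ g^k) and J(g) = ∩_{k≥1} (Z_k(g) + g^k), where Z_k(g) is the upper central series and g^k the lower central series. Then the orthogonal complement of i(g) with respect to B equals J(g): i(g)^⊥ = J(g). -/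
/-- if a finite-dimensional nilpotent Lie algebra `g` carries an
invariant metric `B`, then the orthogonal complement of `i(g)` is `J(g)`. -/
theorem stmt7 (F : Type*) [Field F] [CharZero F]
    (g : Type*) [LieRing g] [LieAlgebra F g] [FiniteDimensional F g]
    [LieRing.IsNilpotent g]
    (B : g →ₗ[F] g →ₗ[F] F)
    (hsym : ∀ x y : g, B x y = B y x)
    (hnondeg : ∀ x : g, (∀ y : g, B x y = 0) → x = 0)
    (hinv : ∀ x y z : g, B ⁅x, y⁆ z = - B y ⁅x, z⁆) :
    let iI : LieIdeal F g := ⨆ k : ℕ, ((⊥ : LieIdeal F g).ucs (k + 1) ⊓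
      LieModule.lowerCentralSeries F g g (k + 1))
    let JI : LieIdeal F g := ⨅ k : ℕ, ((⊥ : LieIdeal F g).ucs (k + 1) ⊔
      LieModule.lowerCentralSeries F g g (k + 1))
    ∀ x : g, (∀ w : g, w ∈ iI → B x w = 0) ↔ x ∈ JI := by
  intro iI JI x
  have hrefl : B.IsRefl := fun a b h => by rw [hsym]; exact h
  have hnd : LinearMap.BilinForm.Nondegenerate B :=
    ⟨hnondeg, fun y hy => hnondeg y (fun x => by rw [hsym]; exact hy x)⟩
  -- membership in orthogonal via kernels
  have horth_le : ∀ (N : Submodule F g) (y : g),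
      y ∈ LinearMap.BilinForm.orthogonal B N ↔ N ≤ LinearMap.ker (B.flip y) := by
    intro N y
    simp only [LinearMap.BilinForm.mem_orthogonal_iff, SetLike.le_def, LinearMap.mem_ker,
      LinearMap.flip_apply, LinearMap.BilinForm.IsOrtho]
  have orth_sup : ∀ N L : Submodule F g,
      LinearMap.BilinForm.orthogonal B (N ⊔ L) =
        LinearMap.BilinForm.orthogonal B N ⊓ LinearMap.BilinForm.orthogonal B L := by
    intro N L
    ext y
    rw [horth_le, sup_le_iff, Submodule.mem_inf, horth_le, horth_le]
  have orth_iSup : ∀ N : ℕ → Submodule F g,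
      LinearMap.BilinForm.orthogonal B (⨆ k, N k) =
        ⨅ k, LinearMap.BilinForm.orthogonal B (N k) := by
    intro N
    ext y
    rw [horth_le, iSup_le_iff, Submodule.mem_iInf]
    exact forall_congr' fun k => (horth_le (N k) y).symm
  have orth_orth : ∀ N : Submodule F g,
      LinearMap.BilinForm.orthogonal B (LinearMap.BilinForm.orthogonal B N) = N :=
    LinearMap.BilinForm.orthogonal_orthogonal hnd hrefl
  have orth_inf : ∀ N L : Submodule F g,
      LinearMap.BilinForm.orthogonal B (N ⊓ L) =
        LinearMap.BilinForm.orthogonal B N ⊔ LinearMap.BilinForm.orthogonal B L := by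
    intro N L
    conv_lhs => rw [← orth_orth N, ← orth_orth L, ← orth_sup, orth_orth]
  -- the key duality between the two central series
  have key : ∀ k : ℕ,
      LinearMap.BilinForm.orthogonal B (LieSubmodule.toSubmodule (LieModule.lowerCentralSeries F g g k)) =
        (LieSubmodule.toSubmodule ((⊥ : LieIdeal F g).ucs k)) := by
    intro k
    induction k with
    | zero =>
      simp only [LieModule.lowerCentralSeries_zero, LieSubmodule.ucs_zero,
        LieSubmodule.top_toSubmodule, LieSubmodule.bot_toSubmodule]
      exact LinearMap.BilinForm.orthogonal_top_eq_bot hnd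
    | succ k ih =>
      ext y
      rw [horth_le]
      rw [LieModule.lowerCentralSeries_succ, LieSubmodule.lieIdeal_oper_eq_linear_span',
        Submodule.span_le]
      constructor
      · intro h
        rw [LieSubmodule.ucs_succ, LieSubmodule.mem_toSubmodule, LieSubmodule.mem_normalizer]
        intro z
        rw [← LieSubmodule.mem_toSubmodule, ← ih, horth_le]
        intro n hn
        have := h (Set.mem_setOf.mpr ⟨z, trivial, n, hn, rfl⟩)
        simp only [SetLike.mem_coe, LinearMap.mem_ker, LinearMap.flip_apply] at this ⊢
        have h2 := hinv z n y
        rw [this] at h2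
        exact neg_eq_zero.mp h2.symm
      · intro h
        rintro m ⟨z, -, n, hn, rfl⟩
        have hz : ⁅z, y⁆ ∈ LinearMap.BilinForm.orthogonal B
            (LieSubmodule.toSubmodule (LieModule.lowerCentralSeries F g g k)) := by
          rw [ih]
          rw [LieSubmodule.ucs_succ, LieSubmodule.mem_toSubmodule,
            LieSubmodule.mem_normalizer] at h
          exact h z
        rw [horth_le] at hz
        have := hz hn
        simp only [SetLike.mem_coe, LinearMap.mem_ker, LinearMap.flip_apply] at this ⊢
        have h2 := hinv z n y
        rw [this] at h2
        simpa using h2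
  have key' : ∀ k : ℕ,
      LinearMap.BilinForm.orthogonal B (LieSubmodule.toSubmodule ((⊥ : LieIdeal F g).ucs k))
        = (LieSubmodule.toSubmodule (LieModule.lowerCentralSeries F g g k)) := by
    intro k; rw [← key k, orth_orth]
  -- translate iI and JI to submodules
  have hiI : (LieSubmodule.toSubmodule iI) = ⨆ k : ℕ,
      ((LieSubmodule.toSubmodule ((⊥ : LieIdeal F g).ucs (k + 1))) ⊓
        (LieSubmodule.toSubmodule (LieModule.lowerCentralSeries F g g (k + 1)))) := by
    rw [LieSubmodule.iSup_toSubmodule]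
    exact iSup_congr fun k => LieSubmodule.inf_toSubmodule _ _
  have hJI : (LieSubmodule.toSubmodule JI) = ⨅ k : ℕ,
      ((LieSubmodule.toSubmodule ((⊥ : LieIdeal F g).ucs (k + 1))) ⊔
        (LieSubmodule.toSubmodule (LieModule.lowerCentralSeries F g g (k + 1)))) := by
    rw [LieSubmodule.iInf_toSubmodule]
    exact iInf_congr fun k => LieSubmodule.sup_toSubmodule _ _
  have hmain : LinearMap.BilinForm.orthogonal B (LieSubmodule.toSubmodule iI) = (LieSubmodule.toSubmodule JI) := by
    rw [hiI, hJI, orth_iSup]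
    refine iInf_congr fun k => ?_
    rw [orth_inf, key, key', sup_comm]
  constructor
  · intro h
    rw [← LieSubmodule.mem_toSubmodule, ← hmain, horth_le]
    intro w hw
    simp only [SetLike.mem_coe, LinearMap.mem_ker, LinearMap.flip_apply]
    rw [hsym]
    exact h w ((LieSubmodule.mem_toSubmodule _).mp hw)
  · intro h w hw
    rw [← LieSubmodule.mem_toSubmodule, ← hmain, horth_le] at h
    have := h ((LieSubmodule.mem_toSubmodule _).mpr hw)
    simp only [SetLike.mem_coe, LinearMap.mem_ker, LinearMap.flip_apply] at this
    rw [hsym]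
    exact this
end

section
/- Let (g, [·,·], B) be a quadratic Lie algebra over a field F possessing abelian ideals i ⊆ J with J = i^⊥ and [g, J] ⊆ i. Let h be an isotropic subspace of g with g = h ⊕ J (direct sum of vector spaces), and for x, y in h write [x,y] = [x,y]_h + Λ(x,y) with [x,y]_h ∈ h and Λ(x,y) ∈ J, so that [·,·]_h is a Lie bracket on h. Then the map φ : i → h* defined by φ(α)(y) = B(α, y) for α in i and y in h is a linear isomorphism which intertwines the action of h: φ([x,α]) = ad_h*(x)(φ(α)) for all x in h and α in i, where ad_h*(x)(ξ)(y) = −ξ([x,y]_h). In other words, φ is an isomorphism of h-modules from (i, ρ) to (h*, ad_h*), where ρ(x)(α) = [x,α]. -/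
/-- in a quadratic Lie algebra with abelian ideals `i ⊆ J`, `J = i^⊥`,
`[g, J] ⊆ i`, and an isotropic complement `h` of `J`, the map `φ : i → h*`,
`φ(α)(y) = B(α, y)`, is an isomorphism of `h`-modules onto the coadjoint module. -/
theorem stmt8 (F : Type*) [Field F] [CharZero F]
    (g : Type*) [LieRing g] [LieAlgebra F g] [FiniteDimensional F g]
    (B : g →ₗ[F] g →ₗ[F] F)
    (hsym : ∀ x y : g, B x y = B y x)
    (hnondeg : ∀ x : g, (∀ y : g, B x y = 0) → x = 0)
    (hinv : ∀ x y z : g, B ⁅x, y⁆ z = - B y ⁅x, z⁆)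
    (i J : LieIdeal F g) (hiJ : i ≤ J)
    (hJab : ∀ x y : g, x ∈ J → y ∈ J → ⁅x, y⁆ = 0)
    (hperp : ∀ x : g, x ∈ J ↔ ∀ w : g, w ∈ i → B x w = 0)
    (hgJ : ∀ x w : g, w ∈ J → ⁅x, w⁆ ∈ i)
    (h : Submodule F g)
    (hiso : ∀ x y : g, x ∈ h → y ∈ h → B x y = 0)
    (hcompl : IsCompl h (J : Submodule F g))
    (brh : h → h → h) (Λ : h → h → J)
    (hdec : ∀ x y : h, ⁅(x : g), (y : g)⁆ = (brh x y : g) + ((Λ x y : g))) :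
    let φ : i → Module.Dual F h := fun α => (B (α : g)).comp h.subtype
    -- `φ` is a linear isomorphism
    (∀ α β : i, φ (α + β) = φ α + φ β) ∧
    (∀ (c : F) (α : i), φ (c • α) = c • φ α) ∧
    Function.Bijective φ ∧
    -- `φ` intertwines `ρ(x)(α) = ⁅x, α⁆` with the coadjoint action
    -- `ad_h*(x)(ξ)(y) = −ξ([x,y]_h)`
    (∀ (x : h) (α : i) (y : h),
      φ (⟨⁅(x : g), (α : g)⁆, hgJ x α (hiJ α.2)⟩ : i) y = - φ α (brh x y)) := by
  intro φ
  have hBiJ : ∀ (α w : g), α ∈ i → w ∈ J → B α w = 0 := fun α w hα hw => by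
    rw [hsym]; exact (hperp w).1 hw α hα
  -- φ as a linear map
  have hφadd : ∀ α β : i, φ (α + β) = φ α + φ β := by
    intro α β
    ext y
    simp [φ, map_add]
  have hφsmul : ∀ (c : F) (α : i), φ (c • α) = c • φ α := by
    intro c α
    ext y
    simp [φ]
  let φL : i →ₗ[F] Module.Dual F h := { toFun := φ, map_add' := hφadd, map_smul' := hφsmul }
  -- injectivity
  have hinj : Function.Injective φL := by
    rw [← LinearMap.ker_eq_bot, Submodule.eq_bot_iff]
    rintro ⟨α, hα⟩ hker
    have hh : ∀ y ∈ h, B α y = 0 := by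
      intro y hy
      have := LinearMap.congr_fun hker ⟨y, hy⟩
      simpa [φL, φ] using this
    have : α = 0 := by
      apply hnondeg
      intro z
      obtain ⟨a, b, ha, hb, rfl⟩ :=
        Submodule.codisjoint_iff_exists_add_eq.mp hcompl.codisjoint z
      rw [map_add, hh a ha, hBiJ α b hα hb, add_zero]
    simpa using this
  -- dimension count
  have hJorth : (J : Submodule F g) = LinearMap.BilinForm.orthogonal B i.toSubmodule := by
    ext x
    rw [LinearMap.BilinForm.mem_orthogonal_iff]
    constructor
    · intro hx n hn
      show B n x = 0
      rw [← hsym]; exact (hperp x).1 hx n hn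
    · intro hx
      exact (hperp x).2 fun w hw => by rw [hsym]; exact hx w hw
  have hrefl : LinearMap.BilinForm.IsRefl B := fun x y hxy => by rw [hsym]; exact hxy
  have hnd : LinearMap.BilinForm.Nondegenerate B :=
    ⟨fun x hx => hnondeg x hx, fun y hy => hnondeg y (fun x => by rw [hsym]; exact hy x)⟩
  have hdimJ : Module.finrank F (J : Submodule F g) =
      Module.finrank F g - Module.finrank F i.toSubmodule := by
    rw [hJorth]; exact LinearMap.BilinForm.finrank_orthogonal hnd _
  have hdimhJ : Module.finrank F h + Module.finrank F (J : Submodule F g) =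
      Module.finrank F g := Submodule.finrank_add_eq_of_isCompl hcompl
  have hle : Module.finrank F i.toSubmodule ≤ Module.finrank F g :=
    Submodule.finrank_le _
  have hdim : Module.finrank F i.toSubmodule = Module.finrank F (Module.Dual F h) := by
    rw [Subspace.dual_finrank_eq]; omega
  have hbij : Function.Bijective φL :=
    ⟨hinj, (LinearMap.injective_iff_surjective_of_finrank_eq_finrank hdim).1 hinj⟩
  refine ⟨hφadd, hφsmul, hbij, ?_⟩
  intro x α y
  have key : B ⁅(x : g), (α : g)⁆ y = - B (α : g) ⁅(x : g), (y : g)⁆ := hinv _ _ _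
  have hΛ : B (α : g) ((Λ x y : g)) = 0 := hBiJ _ _ α.2 (Λ x y).2
  simp only [φ, LinearMap.comp_apply, Submodule.coe_subtype]
  rw [key, hdec x y, map_add, hΛ, add_zero]
end

section
/- Let h(λ, μ, φ, ad_h*) be a Lie algebra on h ⊕ a ⊕ h* constructed as an abelian extension: (h, [·,·]_h) a Lie algebra, a a trivial h-module, the coadjoint representation ad_h* of h on h*, φ : h → Hom(a, h*) a 1-cocycle, and (λ, μ) a 2-cocycle, with bracket [x,y] = [x,y]_h + λ(x,y) + μ(x,y) and [x, u + α] = φ(x)(u) + ad_h*(x)(α) for x, y ∈ h, u ∈ a, α ∈ h*, and zero bracket on a ⊕ h*. Let B_a be a non-degenerate symmetric bilinear form on a, and define the symmetric non-degenerate bilinear form B on h ⊕ a ⊕ h* by B(x + u + α, y + v + β) = α(y) + β(x) + B_a(u, v). Then B is invariant (i.e. B([X,Y],Z) = −B(Y,[X,Z]) for all X, Y, Z) if and only if both of the following hold for all x, y, z in h and u in a: (1) φ(x)(u)(y) = −B_a(λ(x,y), u); and (2) μ(x,y)(z) = μ(y,z)(x). -/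
/-- on the abelian extension `h(λ, μ, φ, ad_h*)` on `h ⊕ a ⊕ h*`, the
bilinear form `B(x+u+α, y+v+β) = α(y) + β(x) + B_a(u,v)` is invariant iff
`φ(x)(u)(y) = −B_a(λ(x,y), u)` and `μ(x,y)(z) = μ(y,z)(x)`. -/
theorem stmt9 (F : Type*) [Field F] [CharZero F]
    (h : Type*) [LieRing h] [LieAlgebra F h] [FiniteDimensional F h]
    (a : Type*) [AddCommGroup a] [Module F a] [FiniteDimensional F a]
    (Ba : a →ₗ[F] a →ₗ[F] F)
    (hBasym : ∀ u v : a, Ba u v = Ba v u)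
    (hBand : ∀ u : a, (∀ v : a, Ba u v = 0) → u = 0)
    (φ : h →ₗ[F] a →ₗ[F] Module.Dual F h)
    -- `φ` is a 1-cocycle for the coadjoint representation
    (hφ : ∀ (x y : h) (u : a) (z : h),
      φ ⁅x, y⁆ u z = - φ y u ⁅x, z⁆ + φ x u ⁅y, z⁆)
    (la : h →ₗ[F] h →ₗ[F] a) (hla : ∀ x y : h, la x y = - la y x)
    (mu : h →ₗ[F] h →ₗ[F] Module.Dual F h) (hmu : ∀ x y : h, mu x y = - mu y x)
    -- `(λ, μ)` is a 2-cocycle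
    (hcoc1 : ∀ x y z : h, la ⁅x, y⁆ z + la ⁅y, z⁆ x + la ⁅z, x⁆ y = 0)
    (hcoc2 : ∀ x y z w : h,
      φ x (la y z) w - φ y (la x z) w + φ z (la x y) w
        - mu y z ⁅x, w⁆ + mu x z ⁅y, w⁆ - mu x y ⁅z, w⁆
        - mu ⁅x, y⁆ z w + mu ⁅x, z⁆ y w - mu ⁅y, z⁆ x w = 0) :
    -- the coadjoint action and the bracket of `h(λ, μ, φ, ad_h*)`
    let coad : h → Module.Dual F h → Module.Dual F h :=
      fun x ξ => - (ξ ∘ₗ LieAlgebra.ad F h x)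
    let br : h × a × Module.Dual F h → h × a × Module.Dual F h →
        h × a × Module.Dual F h :=
      fun p q => (⁅p.1, q.1⁆, la p.1 q.1,
        mu p.1 q.1 + φ p.1 q.2.1 - φ q.1 p.2.1 + coad p.1 q.2.2 - coad q.1 p.2.2)
    let Bm : h × a × Module.Dual F h → h × a × Module.Dual F h → F :=
      fun p q => p.2.2 q.1 + q.2.2 p.1 + Ba p.2.1 q.2.1
    -- invariance of `B` is equivalent to the two conditions
    ((∀ X Y Z : h × a × Module.Dual F h, Bm (br X Y) Z = - Bm Y (br X Z)) ↔
      ((∀ (x y : h) (u : a), φ x u y = - Ba (la x y) u) ∧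
       (∀ x y z : h, mu x y z = mu y z x))) := by
  intro coad br Bm
  constructor
  · intro H
    have key : ∀ x y z : h, mu x y z = mu z x y := by
      intro x y z
      have := H (x, 0, 0) (y, 0, 0) (z, 0, 0)
      simp [coad, br, Bm] at this
      rw [hmu x z] at this
      simpa using this
    constructor
    · intro x y u
      have := H (x, 0, 0) (0, u, 0) (y, 0, 0)
      simp [coad, br, Bm] at this
      rw [this, hBasym u (la x y)]
    · intro x y z
      rw [key x y z, key z x y]
  · rintro ⟨h1, h2⟩ ⟨x, u, α⟩ ⟨y, v, β⟩ ⟨z, w, γ⟩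
    simp [coad, br, Bm]
    have e1 := h1 x z v
    have e2 := h1 x y w
    have e3 := h1 y z u
    have e4 := h1 z y u
    have e5 : mu x y z = - mu x z y := by
      rw [h2 x y z, hmu y z, LinearMap.neg_apply, h2 x z y]
    have e6 : α ⁅y, z⁆ = - α ⁅z, y⁆ := by rw [← lie_skew z y, map_neg, neg_neg]
    have e7 : Ba (la y z) u = - Ba (la z y) u := by rw [hla y z]; simp
    have e8 : Ba v (la x z) = Ba (la x z) v := hBasym v (la x z)
    linear_combination e5 + e1 + e8 - e3 - e4 + e7 + e6 + e2
end

section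
/- Let h(λ, μ, φ, ad_h*) be a Lie algebra on h ⊕ a ⊕ h* constructed as an abelian extension (bracket [x,y] = [x,y]_h + λ(x,y) + μ(x,y), [x, u+α] = φ(x)(u) + ad_h*(x)(α), zero bracket on a ⊕ h*), such that μ(x,y)(z) = μ(y,z)(x) for all x, y, z in h. Let B_a be a non-degenerate symmetric bilinear form on a and let λ_φ : h × h → a be the bilinear map determined by φ(x)(u)(y) = −B_a(λ_φ(x,y), u). Suppose there exists a linear map L : h → a such that: (i) φ(x)(L(y)) − φ(y)(L(x)) = 0 for all x, y in h (i.e. e_φ(L) = 0); and (ii) λ_φ(x,y) = λ(x,y) − L([x,y]_h) for all x, y in h (i.e. λ_φ = λ + d_a(L)). Then the Lie algebra h(λ, μ, φ, ad_h*) admits an invariant metric, i.e. a non-degenerate symmetric bilinear form B with B([X,Y],Z) = −B(Y,[X,Z]) for all X, Y, Z. -/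
/-- if `μ` is cyclic and there is a linear map `L : h → a` with
`e_φ(L) = 0` and `λ_φ = λ + d_a(L)`, then `h(λ, μ, φ, ad_h*)` admits an invariant
metric. -/
theorem stmt12 (F : Type*) [Field F] [CharZero F]
    (h : Type*) [LieRing h] [LieAlgebra F h] [FiniteDimensional F h]
    (a : Type*) [AddCommGroup a] [Module F a] [FiniteDimensional F a]
    (Ba : a →ₗ[F] a →ₗ[F] F)
    (hBasym : ∀ u v : a, Ba u v = Ba v u)
    (hBand : ∀ u : a, (∀ v : a, Ba u v = 0) → u = 0)
    (φ : h →ₗ[F] a →ₗ[F] Module.Dual F h)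
    (hφ : ∀ (x y : h) (u : a) (z : h),
      φ ⁅x, y⁆ u z = - φ y u ⁅x, z⁆ + φ x u ⁅y, z⁆)
    (la : h →ₗ[F] h →ₗ[F] a) (hla : ∀ x y : h, la x y = - la y x)
    (mu : h →ₗ[F] h →ₗ[F] Module.Dual F h) (hmu : ∀ x y : h, mu x y = - mu y x)
    (hcoc1 : ∀ x y z : h, la ⁅x, y⁆ z + la ⁅y, z⁆ x + la ⁅z, x⁆ y = 0)
    (hcoc2 : ∀ x y z w : h,
      φ x (la y z) w - φ y (la x z) w + φ z (la x y) w
        - mu y z ⁅x, w⁆ + mu x z ⁅y, w⁆ - mu x y ⁅z, w⁆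
        - mu ⁅x, y⁆ z w + mu ⁅x, z⁆ y w - mu ⁅y, z⁆ x w = 0)
    -- `μ` is cyclic
    (hmucyc : ∀ x y z : h, mu x y z = mu y z x)
    -- `λ_φ` is the bilinear map determined by `φ` and `B_a`
    (laφ : h →ₗ[F] h →ₗ[F] a)
    (hlaφ : ∀ (x y : h) (u : a), φ x u y = - Ba (laφ x y) u)
    -- the linear map `L` with (i) `e_φ(L) = 0` and (ii) `λ_φ = λ + d_a(L)`
    (L : h →ₗ[F] a)
    (hL1 : ∀ x y : h, φ x (L y) - φ y (L x) = 0)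
    (hL2 : ∀ x y : h, laφ x y = la x y - L ⁅x, y⁆) :
    -- the bracket of `h(λ, μ, φ, ad_h*)` on `h ⊕ a ⊕ h*`
    let coad : h → Module.Dual F h → Module.Dual F h :=
      fun x ξ => - (ξ ∘ₗ LieAlgebra.ad F h x)
    let br : h × a × Module.Dual F h → h × a × Module.Dual F h →
        h × a × Module.Dual F h :=
      fun p q => (⁅p.1, q.1⁆, la p.1 q.1,
        mu p.1 q.1 + φ p.1 q.2.1 - φ q.1 p.2.1 + coad p.1 q.2.2 - coad q.1 p.2.2)
    -- there exists an invariant metric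
    ∃ Bm : (h × a × Module.Dual F h) →ₗ[F] (h × a × Module.Dual F h) →ₗ[F] F,
      (∀ X Y : h × a × Module.Dual F h, Bm X Y = Bm Y X) ∧
      (∀ X : h × a × Module.Dual F h, (∀ Y, Bm X Y = 0) → X = 0) ∧
      (∀ X Y Z : h × a × Module.Dual F h, Bm (br X Y) Z = - Bm Y (br X Z)) := by
  intro coad br
  refine ⟨LinearMap.mk₂ F
    (fun X Y => X.2.2 Y.1 + Y.2.2 X.1 + Ba X.2.1 Y.2.1 - Ba (L X.1) Y.2.1
      - Ba (L Y.1) X.2.1 + Ba (L X.1) (L Y.1))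
    (by
      intro X X' Y
      simp only [Prod.fst_add, Prod.snd_add, map_add, LinearMap.add_apply]
      ring)
    (by
      intro c X Y
      simp only [Prod.smul_fst, Prod.smul_snd, map_smul, LinearMap.smul_apply,
        smul_eq_mul]
      ring)
    (by
      intro X Y Y'
      simp only [Prod.fst_add, Prod.snd_add, map_add, LinearMap.add_apply]
      ring)
    (by
      intro X c Y
      simp only [Prod.smul_fst, Prod.smul_snd, map_smul, LinearMap.smul_apply,
        smul_eq_mul]
      ring), ?_, ?_, ?_⟩
  · rintro ⟨x, u, ξ⟩ ⟨y, v, η⟩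
    simp only [LinearMap.mk₂_apply]
    rw [hBasym u v, hBasym (L x) v, hBasym (L y) u, hBasym (L x) (L y)]
    ring
  · rintro ⟨x, u, ξ⟩ hX
    have hx : x = 0 := by
      rw [← Module.forall_dual_apply_eq_zero_iff F x]
      intro η
      have := hX (0, 0, η)
      simpa using this
    subst hx
    have hu : u = 0 := by
      apply hBand
      intro v
      have := hX (0, v, 0)
      simpa using this
    subst hu
    have hξ : ξ = 0 := by
      apply LinearMap.ext
      intro y
      have := hX (y, 0, 0)
      simpa using this
    subst hξ
    rfl
  · rintro ⟨x, u, ξ⟩ ⟨y, v, η⟩ ⟨z, w, ζ⟩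
    simp only [br, coad, LinearMap.mk₂_apply, LinearMap.add_apply,
      LinearMap.sub_apply, LinearMap.neg_apply, LinearMap.comp_apply,
      LieAlgebra.ad_apply]
    -- scalar identities
    have hzy : (⁅z, y⁆ : h) = -⁅y, z⁆ := (lie_skew z y).symm
    have A : mu x z y = - mu x y z := by
      have h1 := hmucyc x z y
      have h2 := LinearMap.congr_fun (hmu z y) x
      have h3 := hmucyc y z x
      have h4 := hmucyc z x y
      simp only [LinearMap.neg_apply] at h2
      linear_combination h1 + h2 - h3 - h4
    have B1 : φ x v z = - Ba (la x z) v + Ba (L ⁅x, z⁆) v := by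
      rw [hlaφ x z v, hL2 x z]
      simp only [map_sub, LinearMap.sub_apply]
      ring
    have B2 : φ x w y = - Ba (la x y) w + Ba (L ⁅x, y⁆) w := by
      rw [hlaφ x y w, hL2 x y]
      simp only [map_sub, LinearMap.sub_apply]
      ring
    have hlaφskew : laφ z y = - laφ y z := by
      rw [hL2 z y, hL2 y z, hla z y, hzy, map_neg]
      abel
    have C : φ y u z + φ z u y = 0 := by
      rw [hlaφ y z u, hlaφ z y u, hlaφskew, map_neg, LinearMap.neg_apply]
      ring
    have D1 : Ba (L ⁅x, y⁆) (L z) = Ba (la x y) (L z) + φ x (L z) y := by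
      rw [hlaφ x y (L z), hL2 x y]
      simp only [map_sub, LinearMap.sub_apply]
      ring
    have D2 : Ba (L y) (L ⁅x, z⁆) = Ba (la x z) (L y) + φ x (L y) z := by
      rw [hBasym, hlaφ x z (L y), hL2 x z]
      simp only [map_sub, LinearMap.sub_apply]
      ring
    have E : φ x (L z) y + φ x (L y) z = 0 := by
      have e1 := LinearMap.congr_fun (hL1 x z) y
      have e2 := LinearMap.congr_fun (hL1 x y) z
      simp only [LinearMap.sub_apply, LinearMap.zero_apply, sub_eq_zero] at e1 e2
      rw [e1, e2, hlaφ z y (L x), hlaφ y z (L x), hlaφskew, map_neg,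
        LinearMap.neg_apply]
      ring
    have S1 : Ba v (la x z) = Ba (la x z) v := hBasym _ _
    have S2 : Ba (L z) (la x y) = Ba (la x y) (L z) := hBasym _ _
    have S3 : Ba (L y) (la x z) = Ba (la x z) (L y) := hBasym _ _
    have hξs : ξ ⁅z, y⁆ = - ξ ⁅y, z⁆ := by rw [hzy, map_neg]
    linear_combination A + B1 + S1 + B2 - C + hξs + D1 - S2 + D2 - S3 + E
end

section
/- Let h(λ, μ, φ, ad_h*) be a Lie algebra on h ⊕ a ⊕ h* constructed as an abelian extension (bracket [x,y] = [x,y]_h + λ(x,y) + μ(x,y), [x, u+α] = φ(x)(u) + ad_h*(x)(α), zero bracket on a ⊕ h*), such that μ(x,y)(z) = μ(y,z)(x) for all x, y, z in h. Let B_a be a non-degenerate symmetric bilinear form on a and let λ_φ : h × h → a be the bilinear map determined by φ(x)(u)(y) = −B_a(λ_φ(x,y), u). Suppose there exists a linear map L : h → a such that: (i) λ_φ(x,y) = λ(x,y) − L([x,y]_h) for all x, y in h; and (ii) B_a(λ_φ(y,z), L(x)) = B_a(λ_φ(x,y), L(z)) for all x, y, z in h. Then the Lie algebra h(λ, μ,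 φ, ad_h*) admits an invariant metric, i.e. a non-degenerate symmetric bilinear form B with B([X,Y],Z) = −B(Y,[X,Z]) for all X, Y, Z. -/
/-- if `μ` is cyclic and there is a linear map `L : h → a` with
`λ_φ = λ + d_a(L)` and `B_a(λ_φ(y,z), L(x)) = B_a(λ_φ(x,y), L(z))`, then
`h(λ, μ, φ, ad_h*)` admits an invariant metric. -/
theorem stmt13 (F : Type*) [Field F] [CharZero F]
    (h : Type*) [LieRing h] [LieAlgebra F h] [FiniteDimensional F h]
    (a : Type*) [AddCommGroup a] [Module F a] [FiniteDimensional F a]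
    (Ba : a →ₗ[F] a →ₗ[F] F)
    (hBasym : ∀ u v : a, Ba u v = Ba v u)
    (hBand : ∀ u : a, (∀ v : a, Ba u v = 0) → u = 0)
    (φ : h →ₗ[F] a →ₗ[F] Module.Dual F h)
    (hφ : ∀ (x y : h) (u : a) (z : h),
      φ ⁅x, y⁆ u z = - φ y u ⁅x, z⁆ + φ x u ⁅y, z⁆)
    (la : h →ₗ[F] h →ₗ[F] a) (hla : ∀ x y : h, la x y = - la y x)
    (mu : h →ₗ[F] h →ₗ[F] Module.Dual F h) (hmu : ∀ x y : h, mu x y = - mu y x)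
    (hcoc1 : ∀ x y z : h, la ⁅x, y⁆ z + la ⁅y, z⁆ x + la ⁅z, x⁆ y = 0)
    (hcoc2 : ∀ x y z w : h,
      φ x (la y z) w - φ y (la x z) w + φ z (la x y) w
        - mu y z ⁅x, w⁆ + mu x z ⁅y, w⁆ - mu x y ⁅z, w⁆
        - mu ⁅x, y⁆ z w + mu ⁅x, z⁆ y w - mu ⁅y, z⁆ x w = 0)
    -- `μ` is cyclic
    (hmucyc : ∀ x y z : h, mu x y z = mu y z x)
    -- `λ_φ` is the bilinear map determined by `φ` and `B_a`
    (laφ : h →ₗ[F] h →ₗ[F] a)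
    (hlaφ : ∀ (x y : h) (u : a), φ x u y = - Ba (laφ x y) u)
    -- the linear map `L` with (i) `λ_φ = λ + d_a(L)` and (ii) the `B_a`-compatibility
    (L : h →ₗ[F] a)
    (hL1 : ∀ x y : h, laφ x y = la x y - L ⁅x, y⁆)
    (hL2 : ∀ x y z : h, Ba (laφ y z) (L x) = Ba (laφ x y) (L z)) :
    -- the bracket of `h(λ, μ, φ, ad_h*)` on `h ⊕ a ⊕ h*`
    let coad : h → Module.Dual F h → Module.Dual F h :=
      fun x ξ => - (ξ ∘ₗ LieAlgebra.ad F h x)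
    let br : h × a × Module.Dual F h → h × a × Module.Dual F h →
        h × a × Module.Dual F h :=
      fun p q => (⁅p.1, q.1⁆, la p.1 q.1,
        mu p.1 q.1 + φ p.1 q.2.1 - φ q.1 p.2.1 + coad p.1 q.2.2 - coad q.1 p.2.2)
    -- there exists an invariant metric
    ∃ Bm : (h × a × Module.Dual F h) →ₗ[F] (h × a × Module.Dual F h) →ₗ[F] F,
      (∀ X Y : h × a × Module.Dual F h, Bm X Y = Bm Y X) ∧
      (∀ X : h × a × Module.Dual F h, (∀ Y, Bm X Y = 0) → X = 0) ∧
      (∀ X Y Z : h × a × Module.Dual F h, Bm (br X Y) Z = - Bm Y (br X Z)) := by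
  intro coad br
  refine ⟨LinearMap.mk₂ F
    (fun X Y => X.2.2 Y.1 + Y.2.2 X.1 + Ba X.2.1 Y.2.1 - Ba (L X.1) Y.2.1
      - Ba (L Y.1) X.2.1 + Ba (L X.1) (L Y.1))
    (by intro X X' Y; simp [Prod.fst_add, Prod.snd_add, map_add,
      LinearMap.add_apply]; ring)
    (by intro c X Y; simp [Prod.smul_fst, Prod.smul_snd, map_smul,
      LinearMap.smul_apply, smul_eq_mul]; ring)
    (by intro X Y Y'; simp [Prod.fst_add, Prod.snd_add, map_add,
      LinearMap.add_apply]; ring)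
    (by intro c X Y; simp [Prod.smul_fst, Prod.smul_snd, map_smul,
      LinearMap.smul_apply, smul_eq_mul]; ring), ?_, ?_, ?_⟩
  · intro X Y
    simp only [LinearMap.mk₂_apply]
    rw [hBasym X.2.1 Y.2.1, hBasym (L X.1) Y.2.1, hBasym (L Y.1) X.2.1,
      hBasym (L X.1) (L Y.1)]
    ring
  · rintro ⟨x, u, α⟩ hX
    have hx : x = 0 := by
      rw [← Module.forall_dual_apply_eq_zero_iff F x]
      intro f
      have := hX (0, 0, f)
      simpa using this
    have hu : u = 0 := by
      apply hBand
      intro v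
      have := hX (0, v, 0)
      simp [hx] at this
      simpa [hBasym u v] using this
    have hα : α = 0 := by
      ext y
      have := hX (y, 0, 0)
      simpa [hx, hu] using this
    simp [hx, hu, hα]
  · rintro ⟨x, u, α⟩ ⟨y, v, β⟩ ⟨z, w, ζ⟩
    simp only [LinearMap.mk₂_apply, br, coad, LinearMap.add_apply,
      LinearMap.sub_apply, LinearMap.neg_apply, LinearMap.comp_apply,
      LieAlgebra.ad_apply]
    have h1 : φ x v z = - Ba (laφ x z) v := hlaφ x z v
    have h2 : φ y u z = - Ba (laφ y z) u := hlaφ y z u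
    have h3 : φ x w y = - Ba (laφ x y) w := hlaφ x y w
    have h4 : φ z u y = - Ba (laφ z y) u := hlaφ z y u
    have h5 : mu x y z + mu x z y = 0 := by
      have e1 := hmucyc x z y
      rw [hmu z y] at e1
      simp only [LinearMap.neg_apply] at e1
      linear_combination hmucyc x y z + e1
    have h6 : Ba (laφ x y) w = Ba (la x y) w - Ba (L ⁅x,y⁆) w := by
      rw [hL1 x y]; simp
    have h7 : Ba (laφ x z) v = Ba (la x z) v - Ba (L ⁅x,z⁆) v := by
      rw [hL1 x z]; simp
    have h7s : Ba v (la x z) = Ba (la x z) v := hBasym _ _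
    have hskew : ∀ p q : h, laφ q p = - laφ p q := by
      intro p q
      have e : L ⁅q, p⁆ = - L ⁅p, q⁆ := by rw [← lie_skew p q, map_neg, neg_neg]
      rw [hL1 q p, hL1 p q, hla q p, e]; abel
    have h8 : Ba (laφ z y) u = - Ba (laφ y z) u := by
      rw [hskew y z]; simp
    have h9 : Ba (laφ x y) (L z) + Ba (laφ x z) (L y) = 0 := by
      have e2 := hL2 y x z
      rw [hskew x y] at e2
      simp only [map_neg, LinearMap.neg_apply] at e2
      linear_combination e2
    have h10 : Ba (L z) (la x y) = Ba (la x y) (L z) := hBasym _ _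
    have h11 : Ba (L y) (la x z) = Ba (la x z) (L y) := hBasym _ _
    have h12 : Ba (la x y) (L z) = Ba (laφ x y) (L z) + Ba (L ⁅x,y⁆) (L z) := by
      rw [hL1 x y]; simp
    have h13 : Ba (la x z) (L y) = Ba (laφ x z) (L y) + Ba (L ⁅x,z⁆) (L y) := by
      rw [hL1 x z]; simp
    have h14 : Ba (L y) (L ⁅x,z⁆) = Ba (L ⁅x,z⁆) (L y) := hBasym _ _
    have hA : α ⁅z, y⁆ = - α ⁅y, z⁆ := by rw [← lie_skew y z, map_neg, neg_neg]
    linear_combination h5 + h1 - h7 + h7s - h2 - h4 + h8 + h3 - h6 - h10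
      - h12 - h11 - h13 + h14 - h9 + hA
end

section
/- Let g be a Lie algebra over a field F and let S be a commutative associative F-algebra with unit 1. Suppose B̄ is an invariant symmetric bilinear form on the current Lie algebra g ⊗ S (bracket [X ⊗ s, Y ⊗ t] = [X,Y] ⊗ st), and for s, t in S define L(s,t)(X,Y) = B̄(X ⊗ s, Y ⊗ t). Then for all s, t in S, all X in the derived subalgebra [g,g], and all Y in g: L(s,t)(X,Y) = L(t,s)(X,Y) = L(st,1)(X,Y) = L(s,t)(Y,X). -/
open TensorProduct

/-- for an invariant symmetric bilinear form `B̄` on the current Lie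
algebra `g ⊗ S`, the forms `L(s,t)(X,Y) = B̄(X ⊗ s, Y ⊗ t)` satisfy
`L(s,t)(X,Y) = L(t,s)(X,Y) = L(st,1)(X,Y) = L(s,t)(Y,X)` for `X ∈ [g,g]`. -/
theorem stmt15 (F : Type*) [Field F] [CharZero F]
    (g : Type*) [LieRing g] [LieAlgebra F g]
    (S : Type*) [CommRing S] [Algebra F S]
    (Bb : (S ⊗[F] g) →ₗ[F] (S ⊗[F] g) →ₗ[F] F)
    (hsym : ∀ U V : S ⊗[F] g, Bb U V = Bb V U)
    (hinv : ∀ W U V : S ⊗[F] g, Bb ⁅W, U⁆ V = - Bb U ⁅W, V⁆) :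
    ∀ (s t : S) (X : g), X ∈ LieAlgebra.derivedSeries F g 1 → ∀ Y : g,
      Bb (s ⊗ₜ[F] X) (t ⊗ₜ[F] Y) = Bb (t ⊗ₜ[F] X) (s ⊗ₜ[F] Y) ∧
      Bb (s ⊗ₜ[F] X) (t ⊗ₜ[F] Y) = Bb ((s * t) ⊗ₜ[F] X) ((1 : S) ⊗ₜ[F] Y) ∧
      Bb (s ⊗ₜ[F] X) (t ⊗ₜ[F] Y) = Bb (s ⊗ₜ[F] Y) (t ⊗ₜ[F] X) := by
  -- Key computation: for a bracket `⁅A,B⁆` we can move the scalars around using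
  -- invariance of `Bb`.
  have key : ∀ (s t : S) (A B Y : g),
      Bb (s ⊗ₜ[F] ⁅A, B⁆) (t ⊗ₜ[F] Y)
        = - Bb ((1 : S) ⊗ₜ[F] B) ((s * t) ⊗ₜ[F] ⁅A, Y⁆) := by
    intro s t A B Y
    have h1 : (s ⊗ₜ[F] ⁅A, B⁆ : S ⊗[F] g) = ⁅s ⊗ₜ[F] A, (1 : S) ⊗ₜ[F] B⁆ := by
      rw [LieAlgebra.ExtendScalars.bracket_tmul, mul_one]
    have h2 : (⁅s ⊗ₜ[F] A, t ⊗ₜ[F] Y⁆ : S ⊗[F] g) = (s * t) ⊗ₜ[F] ⁅A, Y⁆ := by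
      rw [LieAlgebra.ExtendScalars.bracket_tmul]
    rw [h1, hinv, h2]
  intro s t X hX Y
  -- Reduce to the case of a single bracket by linearity.
  have hX' : X ∈ Submodule.span F { m : g | ∃ x ∈ (⊤ : LieIdeal F g),
      ∃ n ∈ (⊤ : LieIdeal F g), ⁅x, n⁆ = m } := by
    rw [← LieSubmodule.lieIdeal_oper_eq_linear_span']
    exact hX
  refine Submodule.span_induction ?_ ?_ ?_ ?_ hX'
  · rintro _ ⟨A, -, B, -, rfl⟩
    refine ⟨?_, ?_, ?_⟩
    · rw [key, key, mul_comm t s]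
    · rw [key, key, mul_one]
    · rw [hsym (s ⊗ₜ[F] Y) (t ⊗ₜ[F] ⁅A, B⁆)]
      rw [key, key, mul_comm t s]
  · simp
  · rintro X₁ X₂ - - ⟨h11, h12, h13⟩ ⟨h21, h22, h23⟩
    constructor
    · simp only [tmul_add, map_add, LinearMap.add_apply, h11, h21]
    constructor
    · simp only [tmul_add, map_add, LinearMap.add_apply, h12, h22]
    · simp only [tmul_add, map_add, LinearMap.add_apply, h13, h23]
  · rintro c X₁ - ⟨h1, h2, h3⟩
    constructor
    · simp only [tmul_smul, map_smul, LinearMap.smul_apply, h1]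
    constructor
    · simp only [tmul_smul, map_smul, LinearMap.smul_apply, h2]
    · simp only [tmul_smul, map_smul, LinearMap.smul_apply, h3]
end

section
/- Let g be a finite-dimensional non-abelian nilpotent Lie algebra over a field F of characteristic zero admitting an invariant metric, and suppose the quotient Lie algebra g/J(g) is non-abelian, where J(g) = ∩_{k≥1} (Z_k(g) + g^k) is the canonical abelian ideal (Z_k the upper central series, g^k the lower central series). Let S be a finite-dimensional commutative associative F-algebra with unit 1. If the current Lie algebra g ⊗ S (bracket [X ⊗ s, Y ⊗ t] = [X,Y] ⊗ st) admits an invariant metric, then there exists a bilinear map ε : S × S → Cent(g/J(g)), where Cent(g/J(g)) is the centroid of g/J(g) (the space of linear maps T : g/J(g) → g/J(g) with T([x,y]) = [x, T(y)] for all x, y), such that: (i) ε(s,t) = ε(st, 1) for all s, t in S; and (ii) if s in S satisfies ε(s,t) = 0 for all t in S, then s = 0. -/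
open TensorProduct

section Aux

variable {F : Type*} [Field F] {g : Type*} [LieRing g] [LieAlgebra F g]

/-- A centroid element maps the upper central series (over `⊥`) into itself. -/
lemma aux_cent_ucs (T : g →ₗ[F] g) (hT : ∀ a x : g, T ⁅a, x⁆ = ⁅a, T x⁆) :
    ∀ k, ∀ z ∈ (⊥ : LieIdeal F g).ucs k, T z ∈ (⊥ : LieIdeal F g).ucs k := by
  intro k
  induction k with
  | zero =>
    intro z hz
    rw [LieSubmodule.ucs_zero, LieSubmodule.mem_bot] at hz ⊢
    simp [hz]
  | succ k ih =>
    intro z hz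
    rw [LieSubmodule.ucs_succ, LieSubmodule.mem_normalizer] at hz ⊢
    intro x
    rw [← hT]
    exact ih _ (hz x)

/-- A centroid element maps the lower central series into itself. -/
lemma aux_cent_lcs (T : g →ₗ[F] g) (hT : ∀ a x : g, T ⁅a, x⁆ = ⁅a, T x⁆) :
    ∀ k, ∀ z ∈ LieModule.lowerCentralSeries F g g k,
      T z ∈ LieModule.lowerCentralSeries F g g k := by
  intro k
  induction k with
  | zero => intro z _; exact LieSubmodule.mem_top _
  | succ k ih =>
    intro z hz
    rw [← LieSubmodule.mem_toSubmodule, LieModule.lowerCentralSeries_succ,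
      LieSubmodule.lieIdeal_oper_eq_linear_span'] at hz
    rw [← LieSubmodule.mem_toSubmodule]
    refine Submodule.span_induction
      (p := fun c _ => T c ∈
        (LieModule.lowerCentralSeries F g g (k + 1)).toSubmodule)
      ?_ ?_ ?_ ?_ hz
    · rintro c ⟨a, -, n, hn, rfl⟩
      rw [LieSubmodule.mem_toSubmodule, hT, LieModule.lowerCentralSeries_succ]
      exact LieSubmodule.lie_mem_lie (LieSubmodule.mem_top _) (ih n hn)
    · simp
    · intro c d _ _ hc hd
      rw [map_add]; exact Submodule.add_mem _ hc hd
    · intro r c _ hc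
      rw [map_smul]; exact Submodule.smul_mem _ r hc

/-- If a centroid element maps `g` into `Z_k + g^{(k)}` then it shifts the series. -/
lemma aux_shift (T : g →ₗ[F] g) (hT : ∀ a x : g, T ⁅a, x⁆ = ⁅a, T x⁆) (k : ℕ)
    (h0 : ∀ z : g, T z ∈ ((⊥ : LieIdeal F g).ucs k).toSubmodule ⊔
      (LieModule.lowerCentralSeries F g g k).toSubmodule) :
    ∀ m, ∀ z ∈ LieModule.lowerCentralSeries F g g m,
      T z ∈ ((⊥ : LieIdeal F g).ucs (k - m)).toSubmodule ⊔
        (LieModule.lowerCentralSeries F g g (k + m)).toSubmodule := by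
  intro m
  induction m with
  | zero => intro z _; simpa using h0 z
  | succ m ih =>
    intro z hz
    have hz' : z ∈ (⁅(⊤ : LieIdeal F g), LieModule.lowerCentralSeries F g g m⁆ :
        LieSubmodule F g g).toSubmodule := by
      rw [← LieModule.lowerCentralSeries_succ, LieSubmodule.mem_toSubmodule]
      exact hz
    rw [LieSubmodule.lieIdeal_oper_eq_linear_span'] at hz'
    refine Submodule.span_induction
      (p := fun c _ => T c ∈ ((⊥ : LieIdeal F g).ucs (k - (m + 1))).toSubmodule ⊔
        (LieModule.lowerCentralSeries F g g (k + (m + 1))).toSubmodule)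
      ?_ ?_ ?_ ?_ hz'
    · rintro c ⟨a, -, n, hn, rfl⟩
      rw [hT]
      obtain ⟨u, hu, v, hv, huv⟩ := Submodule.mem_sup.mp (ih n hn)
      rw [← huv, lie_add]
      apply Submodule.add_mem
      · apply Submodule.mem_sup_left
        rw [LieSubmodule.mem_toSubmodule] at hu ⊢
        rcases Nat.eq_zero_or_pos (k - m) with h | h
        · rw [h, LieSubmodule.ucs_zero, LieSubmodule.mem_bot] at hu
          rw [hu, lie_zero]
          exact LieSubmodule.zero_mem _
        · obtain ⟨j, hj⟩ : ∃ j, k - m = j + 1 := ⟨k - m - 1, by omega⟩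
          have h2 : k - (m + 1) = j := by omega
          rw [hj, LieSubmodule.ucs_succ, LieSubmodule.mem_normalizer] at hu
          rw [h2]
          exact hu a
      · apply Submodule.mem_sup_right
        rw [LieSubmodule.mem_toSubmodule] at hv ⊢
        rw [(by omega : k + (m + 1) = (k + m) + 1), LieModule.lowerCentralSeries_succ]
        exact LieSubmodule.lie_mem_lie (LieSubmodule.mem_top _) hv
    · simp
    · intro c d _ _ hc hd
      rw [map_add]; exact Submodule.add_mem _ hc hd
    · intro r c _ hc
      rw [map_smul]; exact Submodule.smul_mem _ r hc

end Aux

/-- if `g` is a finite-dimensional non-abelian nilpotent quadratic Lie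
algebra with `g/J(g)` non-abelian, `S` a finite-dimensional commutative associative
unital algebra, and the current Lie algebra `g ⊗ S` admits an invariant metric, then
there is a bilinear map `ε : S × S → Cent(g/J(g))` with `ε(s,t) = ε(st,1)` which is
non-degenerate in `s`. -/
theorem stmt16 (F : Type*) [Field F] [CharZero F]
    (g : Type*) [LieRing g] [LieAlgebra F g] [FiniteDimensional F g]
    [LieModule.IsNilpotent g g]
    -- `g` is non-abelian
    (hna : ∃ x y : g, ⁅x, y⁆ ≠ 0)
    -- `g` admits an invariant metric
    (B : g →ₗ[F] g →ₗ[F] F)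
    (hsym : ∀ x y : g, B x y = B y x)
    (hnondeg : ∀ x : g, (∀ y : g, B x y = 0) → x = 0)
    (hinv : ∀ x y z : g, B ⁅x, y⁆ z = - B y ⁅x, z⁆)
    -- the canonical abelian ideal `J(g)`
    (JI : LieIdeal F g)
    (hJI : JI = ⨅ k : ℕ, ((⊥ : LieIdeal F g).ucs (k + 1) ⊔
      LieModule.lowerCentralSeries F g g (k + 1)))
    -- `g / J(g)` is non-abelian
    (hqna : ∃ x y : g ⧸ JI, ⁅x, y⁆ ≠ 0)
    (S : Type*) [CommRing S] [Algebra F S] [FiniteDimensional F S]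
    -- the current Lie algebra `g ⊗ S` admits an invariant metric `B̄`
    (Bb : (S ⊗[F] g) →ₗ[F] (S ⊗[F] g) →ₗ[F] F)
    (hbsym : ∀ U V : S ⊗[F] g, Bb U V = Bb V U)
    (hbnondeg : ∀ U : S ⊗[F] g, (∀ V : S ⊗[F] g, Bb U V = 0) → U = 0)
    (hbinv : ∀ W U V : S ⊗[F] g, Bb ⁅W, U⁆ V = - Bb U ⁅W, V⁆) :
    ∃ ε : S →ₗ[F] S →ₗ[F] ((g ⧸ JI) →ₗ[F] (g ⧸ JI)),
      -- each `ε(s,t)` lies in the centroid of `g/J(g)`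
      (∀ (s t : S) (x y : g ⧸ JI), ε s t ⁅x, y⁆ = ⁅x, ε s t y⁆) ∧
      -- (i) `ε(s,t) = ε(st,1)`
      (∀ s t : S, ε s t = ε (s * t) 1) ∧
      -- (ii) non-degeneracy
      (∀ s : S, (∀ t : S, ε s t = 0) → s = 0) := by
  classical
  have hBnd : LinearMap.BilinForm.Nondegenerate B :=
    ⟨hnondeg, fun y hy => hnondeg y (fun x => by rw [hsym]; exact hy x)⟩
  have uniq : ∀ u v : g, (∀ y, B u y = B v y) → u = v := by
    intro u v h
    have h0 : ∀ y, B (u - v) y = 0 := by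
      intro y; rw [map_sub, LinearMap.sub_apply, h, sub_self]
    have := hnondeg _ h0
    rwa [sub_eq_zero] at this
  set Φ : S → S → g →ₗ[F] g := fun s t =>
    ((LinearMap.BilinForm.toDual B hBnd).symm.toLinearMap).comp
      ((Bb.comp (TensorProduct.mk F S g s)).compl₂ (TensorProduct.mk F S g t)) with hΦdef
  have key : ∀ (s t : S) (x y : g), B (Φ s t x) y = Bb (s ⊗ₜ x) (t ⊗ₜ y) := by
    intro s t x y
    simp only [hΦdef, LinearMap.comp_apply, LinearEquiv.coe_coe,
      LinearMap.BilinForm.apply_toDual_symm_apply, LinearMap.compl₂_apply,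
      TensorProduct.mk_apply]
  -- `Φ s t` is in the centroid of `g`
  have hcent : ∀ (s t : S) (a x : g), Φ s t ⁅a, x⁆ = ⁅a, Φ s t x⁆ := by
    intro s t a x
    apply uniq
    intro y
    rw [key]
    have h1 : (s ⊗ₜ[F] ⁅a, x⁆ : S ⊗[F] g) = ⁅((1 : S) ⊗ₜ[F] a : S ⊗[F] g), s ⊗ₜ[F] x⁆ := by
      rw [LieAlgebra.ExtendScalars.bracket_tmul, one_mul]
    rw [h1, hbinv, LieAlgebra.ExtendScalars.bracket_tmul, one_mul, ← key, hinv]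
  -- `Φ s t` and `Φ (s*t) 1` agree on brackets
  have hDbr : ∀ (s t : S) (a b : g), Φ s t ⁅a, b⁆ = Φ (s * t) 1 ⁅a, b⁆ := by
    intro s t a b
    apply uniq
    intro y
    rw [key, key]
    have h1 : (s ⊗ₜ[F] ⁅a, b⁆ : S ⊗[F] g) = ⁅(s ⊗ₜ[F] a : S ⊗[F] g), (1 : S) ⊗ₜ[F] b⁆ := by
      rw [LieAlgebra.ExtendScalars.bracket_tmul, mul_one]
    have h2 : ((s * t) ⊗ₜ[F] ⁅a, b⁆ : S ⊗[F] g) =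
        ⁅((s * t) ⊗ₜ[F] a : S ⊗[F] g), (1 : S) ⊗ₜ[F] b⁆ := by
      rw [LieAlgebra.ExtendScalars.bracket_tmul, mul_one]
    rw [h1, h2, hbinv, hbinv, LieAlgebra.ExtendScalars.bracket_tmul,
      LieAlgebra.ExtendScalars.bracket_tmul, mul_one]
  -- basic facts about `JI`
  have hJle : ∀ k : ℕ, JI ≤ (⊥ : LieIdeal F g).ucs (k + 1) ⊔
      LieModule.lowerCentralSeries F g g (k + 1) := by
    intro k; rw [hJI]; exact iInf_le _ k
  have hucs_mono : ∀ j l : ℕ, j ≤ l →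
      (⊥ : LieIdeal F g).ucs j ≤ (⊥ : LieIdeal F g).ucs l := by
    intro j l h
    have mono : Monotone fun n => (⊥ : LieIdeal F g).ucs n :=
      monotone_nat_of_le_succ (fun n => by
        rw [LieSubmodule.ucs_succ]; exact LieSubmodule.le_normalizer _)
    exact mono h
  have hZJ : ((⊥ : LieIdeal F g).ucs 1) ≤ JI := by
    rw [hJI]
    exact le_iInf fun k => le_sup_of_le_left (hucs_mono 1 (k + 1) (by omega))
  -- `Φ s t` preserves `JI`
  have hmapJ : ∀ s t : S, ∀ z ∈ JI, Φ s t z ∈ JI := by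
    intro s t z hz
    rw [hJI]
    rw [hJI] at hz
    rw [LieSubmodule.mem_iInf] at hz ⊢
    intro k
    have hzk := hz k
    rw [LieSubmodule.mem_sup] at hzk
    obtain ⟨a, ha, b, hb, hab⟩ := hzk
    rw [← hab, map_add, LieSubmodule.mem_sup]
    exact ⟨Φ s t a, aux_cent_ucs (Φ s t) (hcent s t) _ a ha,
       Φ s t b, aux_cent_lcs (Φ s t) (hcent s t) _ b hb, rfl⟩
  have hcomap : ∀ s t : S, JI.toSubmodule ≤ JI.toSubmodule.comap (Φ s t) :=
    fun s t z hz => hmapJ s t z hz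
  -- the induced maps on the quotient
  let εf : S → S → ((g ⧸ JI) →ₗ[F] (g ⧸ JI)) := fun s t =>
    Submodule.mapQ JI.toSubmodule JI.toSubmodule (Φ s t) (hcomap s t)
  have hεmk : ∀ (s t : S) (x : g),
      εf s t (LieSubmodule.Quotient.mk (N := JI) x) =
        LieSubmodule.Quotient.mk (N := JI) (Φ s t x) := by
    intro s t x
    rfl
  have hsurj : ∀ u : g ⧸ JI, ∃ x : g, LieSubmodule.Quotient.mk (N := JI) x = u :=
    fun u => Submodule.Quotient.mk_surjective _ u
  -- bilinearity of Φ, hence of εf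
  have hΦadd1 : ∀ s s' t : S, Φ (s + s') t = Φ s t + Φ s' t := by
    intro s s' t
    apply LinearMap.ext; intro x; apply uniq; intro y
    simp only [key, LinearMap.add_apply, map_add, TensorProduct.add_tmul]
  have hΦsmul1 : ∀ (c : F) (s t : S), Φ (c • s) t = c • Φ s t := by
    intro c s t
    apply LinearMap.ext; intro x; apply uniq; intro y
    simp only [key, LinearMap.smul_apply, map_smul, TensorProduct.smul_tmul', ← TensorProduct.smul_tmul',
      smul_eq_mul]
  have hΦadd2 : ∀ s t t' : S, Φ s (t + t') = Φ s t + Φ s t' := by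
    intro s t t'
    apply LinearMap.ext; intro x; apply uniq; intro y
    simp only [key, LinearMap.add_apply, map_add, TensorProduct.add_tmul]
  have hΦsmul2 : ∀ (c : F) (s t : S), Φ s (c • t) = c • Φ s t := by
    intro c s t
    apply LinearMap.ext; intro x; apply uniq; intro y
    simp only [key, LinearMap.smul_apply, map_smul, TensorProduct.smul_tmul', ← TensorProduct.smul_tmul',
      smul_eq_mul]
  have hεext : ∀ (s t s' t' : S), Φ s t = Φ s' t' → εf s t = εf s' t' := by
    intro s t s' t' h
    apply LinearMap.ext; intro u
    obtain ⟨x, rfl⟩ := hsurj u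
    rw [hεmk, hεmk, h]
  have hεadd1 : ∀ s s' t : S, εf (s + s') t = εf s t + εf s' t := by
    intro s s' t
    apply LinearMap.ext; intro u
    obtain ⟨x, rfl⟩ := hsurj u
    rw [LinearMap.add_apply, hεmk, hεmk, hεmk, hΦadd1, LinearMap.add_apply]
    exact map_add (Submodule.mkQ JI.toSubmodule) _ _
  have hεsmul1 : ∀ (c : F) (s t : S), εf (c • s) t = c • εf s t := by
    intro c s t
    apply LinearMap.ext; intro u
    obtain ⟨x, rfl⟩ := hsurj u
    rw [LinearMap.smul_apply, hεmk, hεmk, hΦsmul1, LinearMap.smul_apply]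
    exact map_smul (Submodule.mkQ JI.toSubmodule) c _
  have hεadd2 : ∀ s t t' : S, εf s (t + t') = εf s t + εf s t' := by
    intro s t t'
    apply LinearMap.ext; intro u
    obtain ⟨x, rfl⟩ := hsurj u
    rw [LinearMap.add_apply, hεmk, hεmk, hεmk, hΦadd2, LinearMap.add_apply]
    exact map_add (Submodule.mkQ JI.toSubmodule) _ _
  have hεsmul2 : ∀ (c : F) (s t : S), εf s (c • t) = c • εf s t := by
    intro c s t
    apply LinearMap.ext; intro u
    obtain ⟨x, rfl⟩ := hsurj u
    rw [LinearMap.smul_apply, hεmk, hεmk, hΦsmul2, LinearMap.smul_apply]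
    exact map_smul (Submodule.mkQ JI.toSubmodule) c _
  refine ⟨LinearMap.mk₂ F εf hεadd1 (fun c s t => hεsmul1 c s t) hεadd2
    (fun c s t => hεsmul2 c s t), ?_, ?_, ?_⟩
  · -- centroid property on the quotient
    intro s t u v
    obtain ⟨x, rfl⟩ := hsurj u
    obtain ⟨y, rfl⟩ := hsurj v
    rw [LinearMap.mk₂_apply]
    rw [← LieSubmodule.Quotient.mk_bracket, hεmk, hεmk, hcent,
      LieSubmodule.Quotient.mk_bracket]
  · -- property (i)
    intro s t
    rw [LinearMap.mk₂_apply, LinearMap.mk₂_apply]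
    apply LinearMap.ext; intro u
    obtain ⟨x, rfl⟩ := hsurj u
    rw [hεmk, hεmk]
    rw [Submodule.Quotient.eq]
    apply hZJ
    rw [(by rfl : (1 : ℕ) = 0 + 1), LieSubmodule.ucs_succ, LieSubmodule.ucs_zero,
      LieSubmodule.mem_normalizer]
    intro a
    rw [LieSubmodule.mem_bot, lie_sub, ← hcent, ← hcent, hDbr, sub_self]
  · -- property (ii)
    intro s hs
    have hs' : ∀ t : S, εf s t = 0 := by
      intro t
      have := hs t
      rwa [(by rw [LinearMap.mk₂_apply] :
        (LinearMap.mk₂ F εf hεadd1 (fun c s t => hεsmul1 c s t) hεadd2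
          (fun c s t => hεsmul2 c s t)) s t = εf s t)] at this
    -- Φ s t maps everything into JI
    have hΦJ : ∀ (t : S) (z : g), Φ s t z ∈ JI := by
      intro t z
      have h0 : εf s t (LieSubmodule.Quotient.mk (N := JI) z) = 0 := by
        rw [hs' t]; rfl
      rw [hεmk] at h0
      exact LieSubmodule.Quotient.mk_eq_zero'.mp h0
    -- the nilpotency index
    have hex : ∃ n, LieModule.lowerCentralSeries F g g n = ⊥ :=
      LieModule.IsNilpotent.nilpotent (R := F) (L := g) (M := g)
    set N := Nat.find hex with hNdef
    have hNspec : LieModule.lowerCentralSeries F g g N = ⊥ := Nat.find_spec hex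
    obtain ⟨x0, y0, hxy⟩ := hna
    have hbr : ∀ j, j ≤ 1 → ⁅x0, y0⁆ ∈ LieModule.lowerCentralSeries F g g j := by
      intro j hj
      interval_cases j
      · exact LieSubmodule.mem_top _
      · rw [(by rfl : (1 : ℕ) = 0 + 1), LieModule.lowerCentralSeries_succ]
        exact LieSubmodule.lie_mem_lie (LieSubmodule.mem_top _) (LieSubmodule.mem_top _)
    have hN2 : 2 ≤ N := by
      by_contra h
      push_neg at h
      have h1 : ⁅x0, y0⁆ ∈ LieModule.lowerCentralSeries F g g N := hbr N (by omega)
      rw [hNspec, LieSubmodule.mem_bot] at h1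
      exact hxy h1
    set k := N - 1 with hkdef
    have hk1 : 1 ≤ k := by omega
    have hlcsk : LieModule.lowerCentralSeries F g g k ≠ ⊥ :=
      Nat.find_min hex (by omega : k < N)
    have hlcs2k : LieModule.lowerCentralSeries F g g (k + k) = ⊥ := by
      have h1 : LieModule.lowerCentralSeries F g g (k + k) ≤
          LieModule.lowerCentralSeries F g g N :=
        LieModule.antitone_lowerCentralSeries F g g (by omega : N ≤ k + k)
      rw [hNspec] at h1
      exact le_bot_iff.mp h1
    obtain ⟨x, hxmem, hxne⟩ : ∃ x, x ∈ LieModule.lowerCentralSeries F g g k ∧ x ≠ 0 := by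
      by_contra h
      push_neg at h
      exact hlcsk ((LieSubmodule.eq_bot_iff _).mpr h)
    -- base case for the shift lemma
    have hbase : ∀ t : S, ∀ z : g, Φ s t z ∈
        ((⊥ : LieIdeal F g).ucs k).toSubmodule ⊔
        (LieModule.lowerCentralSeries F g g k).toSubmodule := by
      intro t z
      have h1 : Φ s t z ∈ (⊥ : LieIdeal F g).ucs k ⊔
          LieModule.lowerCentralSeries F g g k := by
        have h2 := hJle (k - 1)
        rw [(by omega : k - 1 + 1 = k)] at h2
        exact h2 (hΦJ t z)
      rwa [← LieSubmodule.mem_toSubmodule, LieSubmodule.sup_toSubmodule] at h1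
    have hzero : ∀ t : S, Φ s t x = 0 := by
      intro t
      have h2 := aux_shift (Φ s t) (hcent s t) k (hbase t) k x hxmem
      rw [Nat.sub_self, hlcs2k] at h2
      simpa using h2
    -- hence s ⊗ x pairs trivially with everything
    have hsx : (s ⊗ₜ[F] x : S ⊗[F] g) = 0 := by
      apply hbnondeg
      intro V
      induction V using TensorProduct.induction_on with
      | zero => simp
      | tmul t y => rw [← key, hzero t]; simp
      | add u v hu hv => rw [map_add, hu, hv, add_zero]
    -- conclude s = 0 using a dual vector
    obtain ⟨f, hf⟩ : ∃ f : Module.Dual F g, f x ≠ 0 := by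
      by_contra h
      push_neg at h
      exact hxne ((Module.forall_dual_apply_eq_zero_iff F x).mp h)
    have h5 := congrArg (TensorProduct.map (LinearMap.id (R := F) (M := S)) f) hsx
    rw [map_zero, TensorProduct.map_tmul] at h5
    have h6 := congrArg (TensorProduct.rid F S) h5
    rw [map_zero, TensorProduct.rid_tmul, LinearMap.id_apply] at h6
    have h7 := congrArg (fun z : S => (f x)⁻¹ • z) h6
    simpa [smul_smul, inv_mul_cancel₀ hf] using h7
end

section
/- Let g be a finite-dimensional nilpotent Lie algebra over a field F of characteristic zero with dim g > 1, and let f be a non-zero symmetric invariant bilinear form on g (f([x,y],z) = −f(y,[x,z])). Let A_f be the F-algebra with underlying vector space F × g and (non-associative) product (ξ, x)(η, y) = (ξη + f(x,y), ξy + ηx + (1/2)[x,y]). Then f is non-degenerate if and only if A_f is a simple algebra, i.e. the only subspaces I ⊆ A_f satisfying I·A_f ⊆ I and A_f·I ⊆ I are {0} and A_f (and the product of A_f is non-zero). -/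
/-- for a finite-dimensional nilpotent Lie algebra `g` with
`dim g > 1` and a non-zero symmetric invariant bilinear form `f`, the algebra
`A_f = F × g` with product `(ξ,x)(η,y) = (ξη + f(x,y), ξy + ηx + ½[x,y])` is simple
iff `f` is non-degenerate. -/
theorem stmt18 (F : Type*) [Field F] [CharZero F]
    (g : Type*) [LieRing g] [LieAlgebra F g] [FiniteDimensional F g]
    [LieRing.IsNilpotent g]
    (hdim : 1 < Module.finrank F g)
    (f : g →ₗ[F] g →ₗ[F] F) (hf0 : f ≠ 0)
    (hsym : ∀ x y : g, f x y = f y x)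
    (hinv : ∀ x y z : g, f ⁅x, y⁆ z = - f y ⁅x, z⁆) :
    let mul : F × g → F × g → F × g :=
      fun p q => (p.1 * q.1 + f p.2 q.2,
        p.1 • q.2 + q.1 • p.2 + (2⁻¹ : F) • ⁅p.2, q.2⁆)
    -- `f` is non-degenerate iff `A_f` is simple
    ((∀ x : g, (∀ y : g, f x y = 0) → x = 0) ↔
      ((∃ p q : F × g, mul p q ≠ 0) ∧
       ∀ I : Submodule F (F × g),
         (∀ p ∈ I, ∀ q : F × g, mul p q ∈ I ∧ mul q p ∈ I) →
         I = ⊥ ∨ I = ⊤)) := by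
  intro mul
  constructor
  · -- nondegenerate → simple
    intro hnd
    -- helper: for any x ≠ 0 there is y with f x y ≠ 0
    have hex : ∀ x : g, x ≠ 0 → ∃ y, f x y ≠ 0 := by
      intro x hx
      by_contra h
      push_neg at h
      exact hx (hnd x h)
    -- helper: for any z there is w ≠ 0 with f z w = 0
    have hker : ∀ z : g, ∃ w : g, w ≠ 0 ∧ f z w = 0 := by
      intro z
      have h1 := LinearMap.finrank_range_add_finrank_ker (f z)
      have h2 : Module.finrank F (LinearMap.range (f z)) ≤ 1 := by
        simpa using Submodule.finrank_le (LinearMap.range (f z))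
      have h3 : 0 < Module.finrank F (LinearMap.ker (f z)) := by omega
      have hne : LinearMap.ker (f z) ≠ ⊥ := by
        intro hcon
        rw [hcon, finrank_bot] at h3
        omega
      obtain ⟨w, hw, hw0⟩ := Submodule.exists_mem_ne_zero_of_ne_bot hne
      exact ⟨w, hw0, hw⟩
    constructor
    · refine ⟨(1, 0), (1, 0), ?_⟩
      simp [mul]
    · intro I hI
      by_cases hbot : I = ⊥
      · exact Or.inl hbot
      right
      -- take a nonzero element of I
      obtain ⟨p, hpI, hp0⟩ := Submodule.exists_mem_ne_zero_of_ne_bot hbot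
      -- step 1 : I contains an element with nonzero first coordinate
      have step1 : ∃ c : F, ∃ z : g, c ≠ 0 ∧ ((c, z) : F × g) ∈ I := by
        obtain ⟨ξ, x⟩ := p
        by_cases hx : x = 0
        · subst hx
          refine ⟨ξ, 0, ?_, hpI⟩
          intro h; apply hp0; simp [h]
        · obtain ⟨y, hy⟩ := hex x hx
          have h1 := (hI (ξ, x) hpI (0, y)).1
          have h2 := (hI (ξ, x) hpI (0, y)).2
          have hs := I.add_mem h1 h2
          have heq : mul (ξ, x) (0, y) + mul (0, y) (ξ, x)
              = ((2 * f x y, (2 * ξ) • y) : F × g) := by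
            have hyx : (⁅y, x⁆ : g) = -⁅x, y⁆ := by rw [lie_skew]
            simp only [mul, Prod.mk_add_mk, Prod.mk.injEq, hyx]
            constructor
            · rw [hsym y x]; ring
            · module
          rw [heq] at hs
          exact ⟨2 * f x y, (2 * ξ) • y, by simpa using hy, hs⟩
      obtain ⟨c, z, hc, hczI⟩ := step1
      -- step 2 : I contains (0, w) for some w ≠ 0
      have step2 : ∃ w : g, w ≠ 0 ∧ ((0, w) : F × g) ∈ I := by
        obtain ⟨w, hw0, hfzw⟩ := hker z
        have h1 := (hI (c, z) hczI (0, w)).1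
        have h2 := (hI (c, z) hczI (0, w)).2
        have hs := I.add_mem h1 h2
        have heq : (mul (c, z) (0, w) + mul (0, w) (c, z) : F × g)
            = ((0 : F), (2 * c) • w) := by
          have hwz : (⁅w, z⁆ : g) = -⁅z, w⁆ := by rw [lie_skew]
          simp only [mul, Prod.mk_add_mk, Prod.mk.injEq, hwz]
          constructor
          · rw [hsym w z]; simp [hfzw]
          · module
        rw [heq] at hs
        refine ⟨w, hw0, ?_⟩
        have h2c : (2 * c) ≠ 0 := by
          simp [hc]
        have hmem := I.smul_mem (2 * c)⁻¹ hs
        rw [Prod.smul_mk, smul_zero, smul_smul, inv_mul_cancel₀ h2c, one_smul] at hmem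
        exact hmem
      obtain ⟨w, hw0, hwI⟩ := step2
      -- step 3 : (1, 0) ∈ I
      have step3 : ((1, 0) : F × g) ∈ I := by
        obtain ⟨u, hu⟩ := hex w hw0
        have h1 := (hI (0, w) hwI (0, u)).1
        have h2 := (hI (0, w) hwI (0, u)).2
        have hs := I.add_mem h1 h2
        have heq : (mul (0, w) (0, u) + mul (0, u) (0, w) : F × g)
            = ((2 * f w u, 0) : F × g) := by
          have huw : (⁅u, w⁆ : g) = -⁅w, u⁆ := by rw [lie_skew]
          simp only [mul, Prod.mk_add_mk, Prod.mk.injEq, huw]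
          constructor
          · rw [hsym u w]; ring
          · module
        rw [heq] at hs
        have h2u : (2 * f w u) ≠ 0 := by simp [hu]
        have hmem := I.smul_mem (2 * f w u)⁻¹ hs
        rw [Prod.smul_mk, smul_zero, smul_eq_mul, inv_mul_cancel₀ h2u] at hmem
        exact hmem
      -- step 4 : I = ⊤
      apply Submodule.eq_top_iff'.2
      intro r
      have hmem := (hI (1, 0) step3 r).1
      have heq : mul (1, 0) r = r := by
        refine Prod.ext ?_ ?_ <;> simp [mul]
      rwa [heq] at hmem
  · -- simple → nondegenerate
    intro hsimple x hx
    by_contra hx0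
    -- the radical ⊥ × ker f is a proper nonzero ideal
    set R : Submodule F g := LinearMap.ker f with hR
    have hxR : x ∈ R := by
      rw [hR, LinearMap.mem_ker]
      ext y
      simpa using hx y
    -- key: f ⁅a, b⁆ z = f a ⁅b, z⁆
    have hinv' : ∀ a b z : g, f ⁅a, b⁆ z = f a ⁅b, z⁆ := by
      intro a b z
      rw [← lie_skew a b]
      simp only [map_neg, LinearMap.neg_apply, hinv b a z, neg_neg]
    have hRab : ∀ a ∈ R, ∀ b : g, f ⁅a, b⁆ = 0 ∧ f ⁅b, a⁆ = 0 := by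
      intro a ha b
      have hfa : f a = 0 := LinearMap.mem_ker.1 ha
      constructor
      · ext z
        rw [hinv' a b z, hfa]
        simp
      · ext z
        rw [hinv b a z, hfa]
        simp
    have hRclosed : ∀ a ∈ R, ∀ b : g, ∀ η : F,
        η • a + (2⁻¹ : F) • ⁅a, b⁆ ∈ R ∧ η • a + (2⁻¹ : F) • ⁅b, a⁆ ∈ R := by
      intro a ha b η
      have hfa : f a = 0 := LinearMap.mem_ker.1 ha
      obtain ⟨hab, hba⟩ := hRab a ha b
      constructor <;>
        · rw [hR, LinearMap.mem_ker]
          simp [map_add, map_smul, hfa, hab, hba]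
    let I : Submodule F (F × g) := (⊥ : Submodule F F).prod R
    have hIdeal : ∀ p ∈ I, ∀ q : F × g, mul p q ∈ I ∧ mul q p ∈ I := by
      intro p hp q
      obtain ⟨hp1, hp2⟩ := Submodule.mem_prod.1 hp
      have hp1' : p.1 = 0 := by simpa using hp1
      have hfa : f p.2 = 0 := LinearMap.mem_ker.1 hp2
      have hfa' : f p.2 q.2 = 0 := by rw [hfa]; rfl
      constructor
      · refine Submodule.mem_prod.2 ⟨?_, ?_⟩
        · show (p.1 * q.1 + f p.2 q.2) ∈ (⊥ : Submodule F F)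
          simp [hp1', hfa']
        · show p.1 • q.2 + q.1 • p.2 + (2⁻¹ : F) • ⁅p.2, q.2⁆ ∈ R
          rw [hp1', zero_smul, zero_add]
          exact (hRclosed p.2 hp2 q.2 q.1).1
      · refine Submodule.mem_prod.2 ⟨?_, ?_⟩
        · show (q.1 * p.1 + f q.2 p.2) ∈ (⊥ : Submodule F F)
          simp [hp1', ← hsym p.2 q.2, hfa']
        · show q.1 • p.2 + p.1 • q.2 + (2⁻¹ : F) • ⁅q.2, p.2⁆ ∈ R
          rw [hp1', zero_smul, add_zero]
          exact (hRclosed p.2 hp2 q.2 q.1).2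
    rcases (hsimple.2 I hIdeal) with h | h
    · have : ((0 : F), x) ∈ I := by
        exact Submodule.mem_prod.2 ⟨Submodule.mem_bot F |>.2 rfl, hxR⟩
      rw [h, Submodule.mem_bot, Prod.ext_iff] at this
      exact hx0 (by simpa using this.2)
    · have : ((1 : F), (0 : g)) ∈ I := h ▸ Submodule.mem_top
      have := (Submodule.mem_prod.1 this).1
      simp at this
end
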